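/- arXiv:2109.04099 — 2 statements merged into one kernel-verified Lean document; each statement's English description precedes it below -/
import Mathlib

section
/- Every simple graph G is odd 4-edge-colorable, i.e., E(G) can be partitioned into at most 4 sets each inducing a subgraph whose non-isolated vertices all have odd degree. -/
open SimpleGraph Finset

set_option linter.unusedSectionVars false

variable {V : Type*} [Fintype V] [DecidableEq V]

/-- Number of edges incident to `v` receiving color `i` under the edge-coloring `f`. -/
def colorCount (G : SimpleGraph V) [DecidableRel G.Adj] {k : ℕ}
    (f : Sym2 V → Fin k) (v : V) (i : Fin k) : ℕ :=
  ((G.incidenceFinset v).filter (fun e => f e = i)).card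

/-- The edge-coloring `f` is odd at the vertex `v`: every color appearing at `v`
appears an odd number of times at `v`. -/
def OddAt (G : SimpleGraph V) [DecidableRel G.Adj] {k : ℕ}
    (f : Sym2 V → Fin k) (v : V) : Prop :=
  ∀ i : Fin k, colorCount G f v i = 0 ∨ Odd (colorCount G f v i)

/-- An odd edge-coloring: odd at every vertex. -/
def IsOddColoring (G : SimpleGraph V) [DecidableRel G.Adj] {k : ℕ}
    (f : Sym2 V → Fin k) : Prop :=
  ∀ v : V, OddAt G f v

/-- The odd chromatic index: least `k` admitting an odd `k`-edge-coloring. -/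
noncomputable def oddChromIndex (G : SimpleGraph V) [DecidableRel G.Adj] : ℕ :=
  sInf {k | ∃ f : Sym2 V → Fin k, IsOddColoring G f}

namespace Pyb

/-- degree of `v` in an edge set -/
def dS (S : Finset (Sym2 V)) (v : V) : ℕ := (S.filter (fun e => v ∈ e)).card

def sd (S T : Finset (Sym2 V)) : Finset (Sym2 V) := (S ∪ T) \ (S ∩ T)

lemma dS_empty (v : V) : dS (∅ : Finset (Sym2 V)) v = 0 := by simp [dS]

lemma mem_sd {S T : Finset (Sym2 V)} {e : Sym2 V} :
    e ∈ sd S T ↔ ((e ∈ S ∧ e ∉ T) ∨ (e ∈ T ∧ e ∉ S)) := by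
  simp only [sd, mem_sdiff, mem_union, mem_inter]; tauto

lemma dS_union_of_disjoint {S T : Finset (Sym2 V)} (h : Disjoint S T) (v : V) :
    dS (S ∪ T) v = dS S v + dS T v := by
  unfold dS
  rw [filter_union, card_union_of_disjoint]
  exact Finset.disjoint_filter_filter h

lemma dS_sdiff {S T : Finset (Sym2 V)} (h : T ⊆ S) (v : V) :
    dS (S \ T) v = dS S v - dS T v := by
  unfold dS
  have : (S \ T).filter (fun e => v ∈ e) = S.filter (fun e => v ∈ e) \ T.filter (fun e => v ∈ e) := by
    ext e; simp only [mem_filter, mem_sdiff]; tauto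
  rw [this, card_sdiff_of_subset (filter_subset_filter _ h)]

lemma dS_mono {S T : Finset (Sym2 V)} (h : S ⊆ T) (v : V) : dS S v ≤ dS T v :=
  card_le_card (filter_subset_filter _ h)

lemma dS_sd_mod2 (S T : Finset (Sym2 V)) (v : V) :
    dS (sd S T) v % 2 = (dS S v + dS T v) % 2 := by
  have h1 : S ∩ T ⊆ S ∪ T := (inter_subset_left).trans subset_union_left
  have h2 : dS (sd S T) v = dS (S ∪ T) v - dS (S ∩ T) v := dS_sdiff h1 v
  have h3 : dS (S ∩ T) v ≤ dS (S ∪ T) v := dS_mono h1 v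
  have h4 : dS (S ∪ T) v + dS (S ∩ T) v = dS S v + dS T v := by
    unfold dS
    rw [filter_union, filter_inter_distrib]
    exact card_union_add_card_inter _ _
  omega

lemma dS_singleton (e : Sym2 V) (v : V) :
    dS {e} v = if v ∈ e then 1 else 0 := by
  unfold dS
  by_cases h : v ∈ e <;> simp [filter_singleton, h]

lemma card_mem_sym2 {e : Sym2 V} (h : ¬ e.IsDiag) :
    (univ.filter (fun v => v ∈ e)).card = 2 := by
  induction e with
  | _ a b =>
    rw [Sym2.mk_isDiag_iff] at h
    have : (univ.filter (fun v => v ∈ s(a, b))) = {a, b} := by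
      ext v; simp [Sym2.mem_iff]
    rw [this, card_insert_of_notMem (by simp [h]), card_singleton]

/-- handshake: sum of degrees is twice the number of edges (no diagonal edges) -/
lemma handshake {S : Finset (Sym2 V)} (h : ∀ e ∈ S, ¬ e.IsDiag) :
    ∑ v, dS S v = 2 * S.card := by
  unfold dS
  have h1 : ∀ v : V, (S.filter (fun e => v ∈ e)).card = ∑ e ∈ S, if v ∈ e then 1 else 0 := by
    intro v; rw [card_filter]
  simp only [h1]
  rw [Finset.sum_comm]
  have h2 : ∀ e ∈ S, (∑ v : V, if v ∈ e then 1 else 0) = 2 := by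
    intro e he
    have := card_mem_sym2 (h e he)
    rw [card_filter] at this
    exact this
  rw [Finset.sum_congr rfl h2, Finset.sum_const, smul_eq_mul, mul_comm]

lemma sum_mod_two {α : Type*} [DecidableEq α] (s : Finset α) (f : α → ℕ) :
    (∑ v ∈ s, f v) % 2 = (s.filter (fun v => Odd (f v))).card % 2 := by
  induction s using Finset.induction_on with
  | empty => simp
  | @insert a s ha ih =>
    rw [Finset.sum_insert ha, filter_insert]
    by_cases hodd : Odd (f a)
    · rw [if_pos hodd, card_insert_of_notMem (fun hc => ha (mem_filter.1 hc).1)]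
      rw [Nat.odd_iff] at hodd; omega
    · rw [if_neg hodd]
      rw [Nat.odd_iff] at hodd; omega

lemma even_card_odd_dS {S : Finset (Sym2 V)} (h : ∀ e ∈ S, ¬ e.IsDiag) :
    Even ((univ.filter (fun v => Odd (dS S v))).card) := by
  have hh := handshake h
  have h2 := sum_mod_two (univ : Finset V) (dS S)
  rw [hh] at h2
  rw [Nat.even_iff]; omega

section Walks

variable {H : SimpleGraph V}

lemma walk_parity {x y : V} (q : H.Walk x y) :
    ∃ S : Finset (Sym2 V), (∀ e ∈ S, e ∈ q.edges) ∧
      ∀ v, (Odd (dS S v) ↔ ((v = x ∧ v ≠ y) ∨ (v = y ∧ v ≠ x))) := by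
  induction q with
  | nil =>
    refine ⟨∅, by simp, fun v => ?_⟩
    simp only [dS_empty]
    constructor
    · intro h; exact absurd h (by decide)
    · rintro (⟨h1, h2⟩ | ⟨h1, h2⟩) <;> exact absurd (h1.trans rfl) h2 <;> tauto
  | @cons a b c hadj q ih =>
    obtain ⟨S, hSsub, hSpar⟩ := ih
    refine ⟨sd S {s(a, b)}, ?_, ?_⟩
    · intro e he
      rcases mem_sd.1 he with ⟨h1, _⟩ | ⟨h1, _⟩
      · exact List.mem_cons_of_mem _ (hSsub e h1)
      · rw [Finset.mem_singleton] at h1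
        subst h1
        simp [SimpleGraph.Walk.edges_cons]
    · intro v
      have hab : a ≠ b := H.ne_of_adj hadj
      have key : dS (sd S {s(a, b)}) v % 2
          = (dS S v + (if v = a ∨ v = b then 1 else 0)) % 2 := by
        rw [dS_sd_mod2, dS_singleton]
        congr 2
        simp [Sym2.mem_iff]
      have hq := hSpar v
      rw [Nat.odd_iff] at hq ⊢
      by_cases hva : v = a <;> by_cases hvb : v = b
      · exact absurd (hva.symm.trans hvb) hab
      · rw [if_pos (Or.inl hva)] at key
        by_cases hvc : v = c
        · have hP : dS S v % 2 = 1 := hq.2 (Or.inr ⟨hvc, fun h => hvb h⟩)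
          exact iff_of_false (by omega)
            (by rintro (⟨h1, h2⟩ | ⟨h1, h2⟩) <;> [exact h2 hvc; exact h2 hva])
        · have hP : ¬ (dS S v % 2 = 1) := fun h => by
            rcases hq.1 h with ⟨h1, _⟩ | ⟨h1, _⟩ <;> [exact hvb h1; exact hvc h1]
          exact iff_of_true (by omega) (Or.inl ⟨hva, fun h => hvc h⟩)
      · rw [if_pos (Or.inr hvb)] at key
        by_cases hvc : v = c
        · have hP : ¬ (dS S v % 2 = 1) := fun h => by
            rcases hq.1 h with ⟨h1, h2⟩ | ⟨h1, h2⟩ <;> [exact h2 hvc; exact h2 hvb]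
          exact iff_of_true (by omega) (Or.inr ⟨hvc, fun h => hva h⟩)
        · have hP : dS S v % 2 = 1 := hq.2 (Or.inl ⟨hvb, fun h => hvc h⟩)
          exact iff_of_false (by omega)
            (by rintro (⟨h1, h2⟩ | ⟨h1, h2⟩) <;> [exact hva h1; exact hvc h1])
      · rw [if_neg (by rintro (h | h) <;> [exact hva h; exact hvb h])] at key
        by_cases hvc : v = c
        · have hP : dS S v % 2 = 1 := hq.2 (Or.inr ⟨hvc, fun h => hvb h⟩)
          exact iff_of_true (by omega) (Or.inr ⟨hvc, fun h => hva h⟩)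
        · have hP : ¬ (dS S v % 2 = 1) := fun h => by
            rcases hq.1 h with ⟨h1, _⟩ | ⟨h1, _⟩ <;> [exact hvb h1; exact hvc h1]
          exact iff_of_false (by omega)
            (by rintro (⟨h1, h2⟩ | ⟨h1, h2⟩) <;> [exact hva h1; exact hvc h1])

lemma tjoin [DecidableRel H.Adj] (T : Finset V)
    (hconn : ∀ x ∈ T, ∀ y ∈ T, H.Reachable x y) (hT : Even T.card) :
    ∃ J : Finset (Sym2 V), (∀ e ∈ J, e ∈ H.edgeFinset) ∧ ∀ v, (Odd (dS J v) ↔ v ∈ T) := by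
  suffices h : ∀ n (T : Finset V), T.card ≤ n →
      (∀ x ∈ T, ∀ y ∈ T, H.Reachable x y) → Even T.card →
      ∃ J : Finset (Sym2 V), (∀ e ∈ J, e ∈ H.edgeFinset) ∧ ∀ v, (Odd (dS J v) ↔ v ∈ T) by
    exact h T.card T le_rfl hconn hT
  intro n
  induction n with
  | zero =>
    intro T hcard _ _
    have : T = ∅ := Finset.card_eq_zero.1 (Nat.le_zero.1 hcard)
    subst this
    exact ⟨∅, by simp, fun v => by simp [dS_empty, Nat.odd_iff]⟩
  | succ n ih =>
    intro T hcard hconn hT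
    rcases Finset.eq_empty_or_nonempty T with rfl | ⟨x, hx⟩
    · exact ⟨∅, by simp, fun v => by simp [dS_empty, Nat.odd_iff]⟩
    have hc2 : 2 ≤ T.card := by
      rcases hT with ⟨k, hk⟩
      have : 0 < T.card := Finset.card_pos.2 ⟨x, hx⟩
      omega
    have hne : (T.erase x).Nonempty := by
      rw [← Finset.card_pos, Finset.card_erase_of_mem hx]; omega
    obtain ⟨y, hy⟩ := hne
    have hyx : y ≠ x := (Finset.mem_erase.1 hy).1
    have hyT : y ∈ T := (Finset.mem_erase.1 hy).2
    set T'' := (T.erase x).erase y with hT''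
    have hT''card : T''.card = T.card - 2 := by
      rw [hT'', Finset.card_erase_of_mem hy, Finset.card_erase_of_mem hx]
      omega
    have hT''sub : T'' ⊆ T := (Finset.erase_subset _ _).trans (Finset.erase_subset _ _)
    obtain ⟨J'', hJ''sub, hJ''par⟩ := ih T'' (by omega)
      (fun p hp q hq => hconn p (hT''sub hp) q (hT''sub hq))
      (by rcases hT with ⟨k, hk⟩; rw [hT''card]; exact ⟨k - 1, by omega⟩)
    obtain ⟨q⟩ := hconn x hx y hyT
    obtain ⟨S, hSsub, hSpar⟩ := walk_parity q
    refine ⟨sd J'' S, ?_, ?_⟩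
    · intro e he
      rcases mem_sd.1 he with ⟨h1, _⟩ | ⟨h1, _⟩
      · exact hJ''sub e h1
      · rw [SimpleGraph.mem_edgeFinset]
        exact q.edges_subset_edgeSet (hSsub e h1)
    · intro v
      have key := dS_sd_mod2 J'' S v
      have h1 := hJ''par v
      have h2 := hSpar v
      have hxT'' : x ∉ T'' := by simp [hT'']
      have hyT'' : y ∉ T'' := by simp [hT'']
      rw [Nat.odd_iff] at h1 h2 ⊢
      by_cases hvx : v = x <;> by_cases hvy : v = y
      · exact absurd (hvx.symm.trans hvy).symm hyx
      · have hS1 : dS S v % 2 = 1 := h2.2 (Or.inl ⟨hvx, fun h => hyx ((hvx.symm.trans h).symm ▸ rfl)⟩)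
        have hJ0 : ¬ (dS J'' v % 2 = 1) := fun h => hxT'' (hvx ▸ h1.1 h)
        exact iff_of_true (by omega) (hvx ▸ hx)
      · have hS1 : dS S v % 2 = 1 := h2.2 (Or.inr ⟨hvy, fun h => hvx h⟩)
        have hJ0 : ¬ (dS J'' v % 2 = 1) := fun h => hyT'' (hvy ▸ h1.1 h)
        exact iff_of_true (by omega) (hvy ▸ hyT)
      · have hS0 : ¬ (dS S v % 2 = 1) := fun h => by
          rcases h2.1 h with ⟨hh, _⟩ | ⟨hh, _⟩ <;> [exact hvx hh; exact hvy hh]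
        have hTT : v ∈ T'' ↔ v ∈ T := by
          rw [hT'', Finset.mem_erase, Finset.mem_erase]
          exact ⟨fun h => h.2.2, fun h => ⟨hvy, hvx, h⟩⟩
        have hS0' : dS S v % 2 = 0 := by
          have := Nat.mod_two_eq_zero_or_one (dS S v)
          rcases this with h | h; exact h; exact absurd h hS0
        constructor
        · intro h
          exact hTT.1 (h1.1 (by omega))
        · intro h
          have : dS J'' v % 2 = 1 := h1.2 (hTT.2 h)
          omega

/-- a `T`-join of minimum size: additionally every nonempty subset has a vertex of
odd degree (i.e. it is a forest). -/
lemma tjoin_min [DecidableRel H.Adj] (T : Finset V)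
    (hconn : ∀ x ∈ T, ∀ y ∈ T, H.Reachable x y) (hT : Even T.card) :
    ∃ J : Finset (Sym2 V), (∀ e ∈ J, e ∈ H.edgeFinset) ∧ (∀ v, (Odd (dS J v) ↔ v ∈ T)) ∧
      ∀ S ⊆ J, S.Nonempty → ∃ v, Odd (dS S v) := by
  classical
  obtain ⟨J0, hJ0sub, hJ0par⟩ := tjoin T hconn hT
  set P : Finset (Sym2 V) → Prop :=
    fun J => (∀ e ∈ J, e ∈ H.edgeFinset) ∧ ∀ v, (Odd (dS J v) ↔ v ∈ T) with hP
  have hne : ((univ : Finset (Finset (Sym2 V))).filter P).Nonempty :=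
    ⟨J0, Finset.mem_filter.2 ⟨Finset.mem_univ _, hJ0sub, hJ0par⟩⟩
  obtain ⟨J, hJmem, hJmin⟩ := Finset.exists_min_image _ Finset.card hne
  obtain ⟨hJsub, hJpar⟩ := (Finset.mem_filter.1 hJmem).2
  refine ⟨J, hJsub, hJpar, fun S hS hSne => ?_⟩
  by_contra hcon
  push_neg at hcon
  have heven : ∀ v, dS S v % 2 = 0 := by
    intro v
    have := hcon v
    rw [Nat.odd_iff] at this
    omega
  have hvalid : P (J \ S) := by
    constructor
    · exact fun e he => hJsub e (Finset.mem_sdiff.1 he).1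
    · intro v
      have h1 := dS_sdiff hS v
      have h2 := dS_mono hS v
      have h3 := hJpar v
      have h4 := heven v
      rw [Nat.odd_iff] at h3 ⊢
      by_cases hvT : v ∈ T
      · simp only [hvT, iff_true] at h3 ⊢
        omega
      · simp only [hvT, iff_false] at h3 ⊢
        omega
  have hlt : (J \ S).card < J.card := by
    obtain ⟨e, he⟩ := hSne
    have : e ∈ J := hS he
    have h1 : (J \ S).card ≤ J.card - S.card := by
      rw [Finset.card_sdiff_of_subset hS]
    have h2 : 0 < S.card := Finset.card_pos.2 ⟨e, he⟩
    have h3 : S.card ≤ J.card := Finset.card_le_card hS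
    omega
  exact absurd (hJmin _ (Finset.mem_filter.2 ⟨Finset.mem_univ _, hvalid⟩)) (by omega)

end Walks

section Paths

variable {H : SimpleGraph V} [DecidableRel H.Adj]

lemma exists_edge (hne : H.edgeFinset.Nonempty) : ∃ a b, H.Adj a b := by
  obtain ⟨e, he⟩ := hne
  rw [SimpleGraph.mem_edgeFinset] at he
  induction e with
  | _ a b => exact ⟨a, b, he⟩

lemma exists_maximal_path (hne : H.edgeFinset.Nonempty) :
    ∃ (u v : V) (p : H.Walk u v), p.IsPath ∧
      ∀ (a b : V) (q : H.Walk a b), q.IsPath → q.length ≤ p.length := by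
  classical
  obtain ⟨a, b, hab⟩ := exists_edge hne
  set P : ℕ → Prop := fun n => ∃ (u v : V) (q : H.Walk u v), q.IsPath ∧ q.length = n with hPdef
  have hP1 : P 1 := ⟨a, b, SimpleGraph.Walk.cons hab SimpleGraph.Walk.nil,
    (SimpleGraph.Walk.cons_isPath_iff hab SimpleGraph.Walk.nil).2 ⟨SimpleGraph.Walk.IsPath.nil, by simp [hab.ne]⟩, by simp⟩
  set s : Finset ℕ := (Finset.range (Fintype.card V)).filter P with hsdef
  have hs1 : 1 ∈ s := by
    rw [hsdef, Finset.mem_filter, Finset.mem_range]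
    refine ⟨?_, hP1⟩
    obtain ⟨u, v, q, hq, hlen⟩ := hP1
    have := hq.length_lt
    omega
  have hsne : s.Nonempty := ⟨1, hs1⟩
  obtain ⟨u, v, q, hq, hlen⟩ := (Finset.mem_filter.1 (s.max'_mem hsne)).2
  refine ⟨u, v, q, hq, fun a' b' q' hq' => ?_⟩
  rw [hlen]
  refine Finset.le_max' s _ ?_
  rw [hsdef, Finset.mem_filter, Finset.mem_range]
  exact ⟨hq'.length_lt, ⟨a', b', q', hq', rfl⟩⟩

lemma reach_of_mem_support {u v t : V} (p : H.Walk u v) (ht : t ∈ p.support) :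
    H.Reachable u t := by
  classical
  exact ⟨p.takeUntil t ht⟩

end Paths

section Restrict

variable (G : SimpleGraph V) [DecidableRel G.Adj]

/-- the restriction of `G` to a set of vertices, as a (spanning) graph on `V`. -/
def RG (A : Finset V) : SimpleGraph V where
  Adj x y := G.Adj x y ∧ x ∈ A ∧ y ∈ A
  symm := ⟨by rintro x y ⟨h, ha, hb⟩; exact ⟨h.symm, hb, ha⟩⟩
  loopless := ⟨by rintro x ⟨h, _⟩; exact G.loopless.irrefl x h⟩

instance (A : Finset V) : DecidableRel (RG G A).Adj := by
  intro x y
  unfold RG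
  infer_instance

variable {G}

lemma RG_adj {A : Finset V} {x y : V} :
    (RG G A).Adj x y ↔ G.Adj x y ∧ x ∈ A ∧ y ∈ A := Iff.rfl

lemma RG_mono {A B : Finset V} (h : A ⊆ B) {x y : V} (hxy : (RG G A).Adj x y) :
    (RG G B).Adj x y := ⟨hxy.1, h hxy.2.1, h hxy.2.2⟩

/-- edges of the restriction -/
noncomputable def EA (G : SimpleGraph V) [DecidableRel G.Adj] (A : Finset V) :
    Finset (Sym2 V) := (RG G A).edgeFinset

lemma mem_EA {A : Finset V} {e : Sym2 V} :
    e ∈ EA G A ↔ (∃ x y, e = s(x, y) ∧ G.Adj x y ∧ x ∈ A ∧ y ∈ A) := by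
  unfold EA
  rw [SimpleGraph.mem_edgeFinset]
  induction e with
  | _ a b =>
    constructor
    · intro h; exact ⟨a, b, rfl, h⟩
    · rintro ⟨x, y, hxy, h⟩
      rw [hxy, SimpleGraph.mem_edgeSet]
      exact h

lemma EA_not_diag {A : Finset V} {e : Sym2 V} (he : e ∈ EA G A) : ¬ e.IsDiag := by
  rw [mem_EA] at he
  obtain ⟨x, y, rfl, hadj, _⟩ := he
  rw [Sym2.mk_isDiag_iff]
  exact hadj.ne

lemma mem_of_mem_EA {A : Finset V} {e : Sym2 V} (he : e ∈ EA G A) {v : V} (hv : v ∈ e) :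
    v ∈ A := by
  rw [mem_EA] at he
  obtain ⟨x, y, rfl, hadj, hx, hy⟩ := he
  rcases Sym2.mem_iff.1 hv with rfl | rfl <;> assumption

lemma EA_erase (A : Finset V) (z : V) :
    EA G (A.erase z) = (EA G A).filter (fun e => z ∉ e) := by
  ext e
  rw [Finset.mem_filter, mem_EA, mem_EA]
  constructor
  · rintro ⟨x, y, rfl, hadj, hx, hy⟩
    refine ⟨⟨x, y, rfl, hadj, Finset.mem_of_mem_erase hx, Finset.mem_of_mem_erase hy⟩, ?_⟩
    rw [Sym2.mem_iff]
    rintro (rfl | rfl)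
    · exact (Finset.mem_erase.1 hx).1 rfl
    · exact (Finset.mem_erase.1 hy).1 rfl
  · rintro ⟨⟨x, y, rfl, hadj, hx, hy⟩, hz⟩
    rw [Sym2.mem_iff] at hz
    push_neg at hz
    exact ⟨x, y, rfl, hadj, Finset.mem_erase.2 ⟨fun h => hz.1 h.symm, hx⟩,
      Finset.mem_erase.2 ⟨fun h => hz.2 h.symm, hy⟩⟩

lemma dS_EA_eq_zero {A : Finset V} {v : V} (hv : v ∉ A) : dS (EA G A) v = 0 := by
  unfold dS
  rw [Finset.card_eq_zero, Finset.filter_eq_empty_iff]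
  intro e he hve
  exact hv (mem_of_mem_EA he hve)

lemma reach_mem {B : Finset V} {u v : V} (h : (RG G B).Reachable u v) :
    u = v ∨ (u ∈ B ∧ v ∈ B) := by
  obtain ⟨p⟩ := h
  induction p with
  | nil => exact Or.inl rfl
  | cons hadj p ih =>
    refine Or.inr ⟨hadj.2.1, ?_⟩
    rcases ih with rfl | ⟨_, hv⟩
    · exact hadj.2.2
    · exact hv

end Restrict

section Forest

/-- the graph of an edge set -/
def GJ (J : Finset (Sym2 V)) : SimpleGraph V where
  Adj x y := x ≠ y ∧ s(x, y) ∈ J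
  symm := ⟨by rintro x y ⟨hne, hmem⟩; exact ⟨hne.symm, Sym2.eq_swap ▸ hmem⟩⟩
  loopless := ⟨by rintro x ⟨hne, _⟩; exact hne rfl⟩

instance (J : Finset (Sym2 V)) : DecidableRel (GJ J).Adj := by
  intro x y
  unfold GJ
  infer_instance

lemma GJ_edges_mem {J : Finset (Sym2 V)} {u v : V} {p : (GJ J).Walk u v} {e : Sym2 V}
    (he : e ∈ p.edges) : e ∈ J := by
  have h := p.edges_subset_edgeSet he
  induction e with
  | _ a b => exact ((SimpleGraph.mem_edgeSet (GJ J)).1 h).2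

lemma GJ_adj {J : Finset (Sym2 V)} (hdiag : ∀ e ∈ J, ¬ e.IsDiag) {x y : V}
    (h : s(x, y) ∈ J) : (GJ J).Adj x y := by
  refine ⟨?_, h⟩
  intro hxy
  exact hdiag _ h (by rw [Sym2.mk_isDiag_iff]; exact hxy)

/-- closing a path with an extra edge yields a cycle: contradiction with (∗). -/
lemma cyc_contra {J : Finset (Sym2 V)}
    (hstar : ∀ S ⊆ J, S.Nonempty → ∃ v, Odd (dS S v))
    {c d : V} (q : (GJ J).Walk c d) (hq : q.IsPath) (hcd : c ≠ d)
    (he' : s(c, d) ∈ J) (hne : s(c, d) ∉ q.edges) : False := by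
  obtain ⟨S, hSsub, hSpar⟩ := walk_parity q
  have hSJ : ∀ e ∈ S, e ∈ J := fun e he => GJ_edges_mem (hSsub e he)
  have hdisj : Disjoint S {s(c, d)} := by
    simp only [Finset.disjoint_singleton_right]
    exact fun hc => hne (hSsub _ hc)
  have hTJ : S ∪ {s(c, d)} ⊆ J := by
    intro e he
    rcases Finset.mem_union.1 he with h | h
    · exact hSJ e h
    · rw [Finset.mem_singleton] at h; exact h ▸ he'
  have hTodd : ∀ v, ¬ Odd (dS (S ∪ {s(c, d)}) v) := by
    intro v
    have h1 := dS_union_of_disjoint hdisj v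
    have h2 : dS {s(c, d)} v = if v = c ∨ v = d then 1 else 0 := by
      rw [dS_singleton]
      congr 1
      simp [Sym2.mem_iff]
    have h3 := hSpar v
    rw [Nat.odd_iff] at h3 ⊢
    by_cases hvc : v = c <;> by_cases hvd : v = d
    · exact absurd (hvc.symm.trans hvd) hcd
    · rw [if_pos (Or.inl hvc)] at h2
      have hP : dS S v % 2 = 1 := h3.2 (Or.inl ⟨hvc, fun h => hvd h⟩)
      omega
    · rw [if_pos (Or.inr hvd)] at h2
      have hP : dS S v % 2 = 1 := h3.2 (Or.inr ⟨hvd, fun h => hvc h⟩)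
      omega
    · rw [if_neg (by rintro (h | h) <;> [exact hvc h; exact hvd h])] at h2
      have hP : ¬ (dS S v % 2 = 1) := fun h => by
        rcases h3.1 h with ⟨h1', _⟩ | ⟨h1', _⟩ <;> [exact hvc h1'; exact hvd h1']
      omega
  obtain ⟨v, hv⟩ := hstar _ hTJ ⟨s(c, d), Finset.mem_union_right _ (Finset.mem_singleton_self _)⟩
  exact hTodd v hv

lemma mem_sym2_exists {e : Sym2 V} {v : V} (h : v ∈ e) : ∃ u, e = s(v, u) :=
  ⟨Sym2.Mem.other h, (Sym2.other_spec h).symm⟩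

/-- the leaf-star of `v`: edges at `v` all whose other endpoints are leaves -/
def Lv (J : Finset (Sym2 V)) (v : V) : Finset (Sym2 V) :=
  J.filter (fun e => v ∈ e ∧ ∀ u ∈ e, u ≠ v → dS J u = 1)

lemma deg_one_of_edges_eq {J : Finset (Sym2 V)} {v u : V} (huv : s(v, u) ∈ J)
    (h : ∀ e ∈ J, v ∈ e → e = s(v, u)) : dS J v = 1 := by
  unfold dS
  have : J.filter (fun e => v ∈ e) = {s(v, u)} := by
    ext e
    rw [Finset.mem_filter, Finset.mem_singleton]
    constructor
    · rintro ⟨he, hve⟩; exact h e he hve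
    · rintro rfl; exact ⟨huv, Sym2.mem_mk_left _ _⟩
  rw [this, Finset.card_singleton]

lemma penult {J : Finset (Sym2 V)} (hdiag : ∀ e ∈ J, ¬ e.IsDiag)
    (hstar : ∀ S ⊆ J, S.Nonempty → ∃ v, Odd (dS S v)) (hne : J.Nonempty) :
    ∃ v : V, (Lv J v).Nonempty ∧ ((J.filter (fun e => v ∈ e)) \ Lv J v).card ≤ 1 := by
  classical
  -- a maximal path in the graph of J
  have hedge : (GJ J).edgeFinset.Nonempty := by
    obtain ⟨e, he⟩ := hne
    refine ⟨e, ?_⟩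
    rw [SimpleGraph.mem_edgeFinset]
    induction e with
    | _ a b => exact GJ_adj hdiag he
  obtain ⟨x₀, yend, p, hp, hmax⟩ := exists_maximal_path hedge
  -- p has length at least 1
  have hlen1 : 1 ≤ p.length := by
    obtain ⟨a, b, hab⟩ := exists_edge hedge
    have := hmax a b (SimpleGraph.Walk.cons hab SimpleGraph.Walk.nil)
      ((SimpleGraph.Walk.cons_isPath_iff hab SimpleGraph.Walk.nil).2
        ⟨SimpleGraph.Walk.IsPath.nil, by simp [hab.ne]⟩)
    simpa using this
  cases p with
  | nil => simp at hlen1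
  | @cons _ x₁ _ h₀ p₁ =>
    -- first edge x₀ - x₁
    have hx01 : x₀ ≠ x₁ := h₀.1
    have hp₁ : p₁.IsPath := ((SimpleGraph.Walk.cons_isPath_iff h₀ p₁).1 hp).1
    have hx₀p₁ : x₀ ∉ p₁.support := ((SimpleGraph.Walk.cons_isPath_iff h₀ p₁).1 hp).2
    cases p₁ with
    | nil =>
      -- maximal path is a single edge: both endpoints are leaves
      have hx₀leaf : ∀ e ∈ J, x₀ ∈ e → e = s(x₀, yend) := by
        intro e he hx₀e
        obtain ⟨w, rfl⟩ := mem_sym2_exists hx₀e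
        have hwx₀ : w ≠ x₀ := by
          intro h; exact hdiag _ he (by rw [Sym2.mk_isDiag_iff]; exact h.symm)
        by_cases hwy : w = yend
        · rw [hwy]
        · exfalso
          have hadj : (GJ J).Adj w x₀ := GJ_adj hdiag (Sym2.eq_swap ▸ he)
          have hq : (SimpleGraph.Walk.cons hadj
              (SimpleGraph.Walk.cons h₀ SimpleGraph.Walk.nil)).IsPath := by
            rw [SimpleGraph.Walk.cons_isPath_iff]
            refine ⟨hp, ?_⟩
            simp [hwx₀, hwy]
          have := hmax _ _ _ hq
          simp at this
      have hyleaf : ∀ e ∈ J, yend ∈ e → e = s(x₀, yend) := by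
        intro e he hye
        obtain ⟨w, rfl⟩ := mem_sym2_exists hye
        have hwy : w ≠ yend := by
          intro h; exact hdiag _ he (by rw [Sym2.mk_isDiag_iff]; exact h.symm)
        by_cases hwx₀ : w = x₀
        · rw [hwx₀, Sym2.eq_swap]
        · exfalso
          have hadj : (GJ J).Adj w yend := GJ_adj hdiag (Sym2.eq_swap ▸ he)
          have hq : (SimpleGraph.Walk.cons hadj
              (SimpleGraph.Walk.cons h₀.symm SimpleGraph.Walk.nil)).IsPath := by
            rw [SimpleGraph.Walk.cons_isPath_iff]
            refine ⟨?_, by simp [hwy, hwx₀]⟩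
            rw [SimpleGraph.Walk.cons_isPath_iff]
            exact ⟨SimpleGraph.Walk.IsPath.nil, by simp [hx01.symm]⟩
          have := hmax _ _ _ hq
          simp at this
      have hd₀ : dS J x₀ = 1 := deg_one_of_edges_eq h₀.2 hx₀leaf
      have hdy : dS J yend = 1 := deg_one_of_edges_eq (Sym2.eq_swap ▸ h₀.2)
        (fun e he hy => (hyleaf e he hy).trans Sym2.eq_swap)
      refine ⟨x₀, ⟨s(x₀, yend), ?_⟩, ?_⟩
      · rw [Lv, Finset.mem_filter]
        refine ⟨h₀.2, Sym2.mem_mk_left _ _, ?_⟩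
        intro u hu hux₀
        rcases Sym2.mem_iff.1 hu with rfl | rfl
        · exact absurd rfl hux₀
        · exact hdy
      · have hsub : (J.filter (fun e => x₀ ∈ e)) \ Lv J x₀ ⊆ {s(x₀, yend)} := by
          intro e hee
          rw [Finset.mem_sdiff, Finset.mem_filter] at hee
          rw [Finset.mem_singleton]
          exact hx₀leaf e hee.1.1 hee.1.2
        exact (Finset.card_le_card hsub).trans (by simp)
    | @cons _ x₂ _ h₁ p₂ =>
      have hx₁x₂ : x₁ ≠ x₂ := h₁.1
      have hinner : (SimpleGraph.Walk.cons h₁ p₂).IsPath :=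
        ((SimpleGraph.Walk.cons_isPath_iff h₀ _).1 hp).1
      have hx₀sup : x₀ ∉ (SimpleGraph.Walk.cons h₁ p₂).support :=
        ((SimpleGraph.Walk.cons_isPath_iff h₀ _).1 hp).2
      have hp₂ : p₂.IsPath := ((SimpleGraph.Walk.cons_isPath_iff h₁ p₂).1 hinner).1
      have hx₁p₂ : x₁ ∉ p₂.support := ((SimpleGraph.Walk.cons_isPath_iff h₁ p₂).1 hinner).2
      have hx₀x₁ : x₀ ≠ x₁ := h₀.1
      have hx₀x₂ : x₀ ≠ x₂ := by
        intro h
        exact hx₀sup (by rw [SimpleGraph.Walk.support_cons, h]; exact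
          List.mem_cons_of_mem _ p₂.start_mem_support)
      have hx₀p₂ : x₀ ∉ p₂.support := by
        intro h
        exact hx₀sup (by rw [SimpleGraph.Walk.support_cons]; exact List.mem_cons_of_mem _ h)
      have hplen : (SimpleGraph.Walk.cons h₀ (SimpleGraph.Walk.cons h₁ p₂)).length
          = p₂.length + 2 := by simp
      -- the key claim: every vertex u ≠ x₂ joined to x₁ is a leaf
      have hKey : ∀ u, s(x₁, u) ∈ J → u ≠ x₂ → dS J u = 1 := by
        intro u huJ hux₂
        have hux₁ : u ≠ x₁ := by
          intro h; exact hdiag _ huJ (by rw [Sym2.mk_isDiag_iff]; exact h.symm)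
        by_cases husup : u ∈ (SimpleGraph.Walk.cons h₀ (SimpleGraph.Walk.cons h₁ p₂)).support
        · rw [SimpleGraph.Walk.support_cons, SimpleGraph.Walk.support_cons] at husup
          rcases List.mem_cons.1 husup with rfl | husup'
          · -- u = x₀ : a leaf
            apply deg_one_of_edges_eq (Sym2.eq_swap ▸ huJ : s(u, x₁) ∈ J)
            intro e he hue
            obtain ⟨w, rfl⟩ := mem_sym2_exists hue
            have hwu : w ≠ u := by
              intro h; exact hdiag _ he (by rw [Sym2.mk_isDiag_iff]; exact h.symm)
            by_cases hwx₁ : w = x₁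
            · rw [hwx₁]
            · exfalso
              by_cases hwsup : w ∈ (SimpleGraph.Walk.cons h₀ (SimpleGraph.Walk.cons h₁ p₂)).support
              · -- close a cycle
                refine cyc_contra hstar
                  ((SimpleGraph.Walk.cons h₀ (SimpleGraph.Walk.cons h₁ p₂)).takeUntil w hwsup)
                  (hp.takeUntil hwsup) hwu.symm (Sym2.eq_swap ▸ he) ?_
                intro hmem
                have hmem' := SimpleGraph.Walk.edges_takeUntil_subset _ hwsup hmem
                rw [SimpleGraph.Walk.edges_cons, List.mem_cons] at hmem'
                rcases hmem' with heq | hmem''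
                · rw [Sym2.eq_iff] at heq
                  rcases heq with ⟨_, h2⟩ | ⟨h1, _⟩
                  · exact hwx₁ h2
                  · exact hux₁ h1
                · exact hx₀sup (SimpleGraph.Walk.fst_mem_support_of_mem_edges _ hmem'')
              · -- extend the path
                have hadj : (GJ J).Adj w u := GJ_adj hdiag (Sym2.eq_swap ▸ he)
                have hq : (SimpleGraph.Walk.cons hadj
                    (SimpleGraph.Walk.cons h₀ (SimpleGraph.Walk.cons h₁ p₂))).IsPath := by
                  rw [SimpleGraph.Walk.cons_isPath_iff]
                  exact ⟨hp, hwsup⟩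
                have := hmax _ _ _ hq
                simp at this
          · rcases List.mem_cons.1 husup' with rfl | husup'' 
            · exact absurd rfl hux₁
            · -- u in p₂.support : cycle
              exfalso
              refine cyc_contra hstar
                (SimpleGraph.Walk.cons h₁ (p₂.takeUntil u husup''))
                ?_ hux₁.symm huJ ?_
              · rw [SimpleGraph.Walk.cons_isPath_iff]
                refine ⟨hp₂.takeUntil husup'', ?_⟩
                intro hmem
                exact hx₁p₂ (SimpleGraph.Walk.support_takeUntil_subset _ husup'' hmem)
              · intro hmem
                rw [SimpleGraph.Walk.edges_cons, List.mem_cons] at hmem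
                rcases hmem with heq | hmem'
                · rw [Sym2.eq_iff] at heq
                  rcases heq with ⟨_, h2⟩ | ⟨h1, _⟩
                  · exact hux₂ h2
                  · exact hx₁x₂ h1
                · exact hx₁p₂ (SimpleGraph.Walk.fst_mem_support_of_mem_edges _
                    (SimpleGraph.Walk.edges_takeUntil_subset _ husup'' hmem'))
        · -- u off the path: all its edges go back to x₁
          rw [SimpleGraph.Walk.support_cons, SimpleGraph.Walk.support_cons] at husup
          simp only [List.mem_cons, not_or] at husup
          obtain ⟨hux₀, _, hup₂⟩ := husup
          apply deg_one_of_edges_eq (Sym2.eq_swap ▸ huJ : s(u, x₁) ∈ J)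
          intro e he hue
          obtain ⟨w', rfl⟩ := mem_sym2_exists hue
          have hw'u : w' ≠ u := by
            intro h; exact hdiag _ he (by rw [Sym2.mk_isDiag_iff]; exact h.symm)
          by_cases hw'x₁ : w' = x₁
          · rw [hw'x₁]
          · exfalso
            by_cases hw'sup :
                w' ∈ (SimpleGraph.Walk.cons h₀ (SimpleGraph.Walk.cons h₁ p₂)).support
            · rw [SimpleGraph.Walk.support_cons, SimpleGraph.Walk.support_cons] at hw'sup
              rcases List.mem_cons.1 hw'sup with rfl | hw's
              · -- w' = x₀ : triangle
                have hadj₁u : (GJ J).Adj x₁ u := GJ_adj hdiag huJ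
                refine cyc_contra hstar (SimpleGraph.Walk.cons h₀
                  (SimpleGraph.Walk.cons hadj₁u SimpleGraph.Walk.nil)) ?_ hw'u ?_ ?_
                · rw [SimpleGraph.Walk.cons_isPath_iff]
                  constructor
                  · rw [SimpleGraph.Walk.cons_isPath_iff]
                    refine ⟨SimpleGraph.Walk.IsPath.nil, ?_⟩
                    intro hmem
                    simp only [SimpleGraph.Walk.support_nil, List.mem_singleton] at hmem
                    exact hux₁ hmem.symm
                  · rw [SimpleGraph.Walk.support_cons]
                    simp only [SimpleGraph.Walk.support_nil, List.mem_cons,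
                      List.mem_singleton, not_or]
                    exact ⟨hw'x₁, hw'u, by simp⟩
                · rw [Sym2.eq_swap]; exact he
                · intro hmem
                  simp only [SimpleGraph.Walk.edges_cons, SimpleGraph.Walk.edges_nil,
                    List.mem_cons, List.not_mem_nil, or_false] at hmem
                  rcases hmem with heq | heq
                  · rw [Sym2.eq_iff] at heq
                    rcases heq with ⟨_, h2⟩ | ⟨h1, _⟩
                    · exact hux₁ h2
                    · exact hw'x₁ h1
                  · rw [Sym2.eq_iff] at heq
                    rcases heq with ⟨h1, _⟩ | ⟨_, h2⟩
                    · exact hw'x₁ h1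
                    · exact hux₁ h2
              · rcases List.mem_cons.1 hw's with rfl | hw'p₂
                · exact hw'x₁ rfl
                · -- w' ∈ p₂.support : cycle through the tail
                  have hadjux₁ : (GJ J).Adj u x₁ := GJ_adj hdiag (Sym2.eq_swap ▸ huJ)
                  refine cyc_contra hstar (SimpleGraph.Walk.cons hadjux₁
                    (SimpleGraph.Walk.cons h₁ (p₂.takeUntil w' hw'p₂))) ?_ hw'u.symm he ?_
                  · rw [SimpleGraph.Walk.cons_isPath_iff]
                    constructor
                    · rw [SimpleGraph.Walk.cons_isPath_iff]
                      exact ⟨hp₂.takeUntil _, fun hm =>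
                        hx₁p₂ (SimpleGraph.Walk.support_takeUntil_subset _ _ hm)⟩
                    · rw [SimpleGraph.Walk.support_cons]
                      simp only [List.mem_cons, not_or]
                      exact ⟨hux₁, fun hm =>
                        hup₂ (SimpleGraph.Walk.support_takeUntil_subset _ _ hm)⟩
                  · intro hmem
                    simp only [SimpleGraph.Walk.edges_cons, List.mem_cons] at hmem
                    rcases hmem with heq | heq | hmem'
                    · rw [Sym2.eq_iff] at heq
                      rcases heq with ⟨_, h2⟩ | ⟨h1, _⟩
                      · exact hw'x₁ h2
                      · exact hux₁ h1
                    · rw [Sym2.eq_iff] at heq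
                      rcases heq with ⟨h1, _⟩ | ⟨h1, _⟩
                      · exact hux₁ h1
                      · exact hux₂ h1
                    · exact hup₂ (SimpleGraph.Walk.fst_mem_support_of_mem_edges _
                        (SimpleGraph.Walk.edges_takeUntil_subset _ hw'p₂ hmem'))
            · -- extend the path by two edges
              rw [SimpleGraph.Walk.support_cons, SimpleGraph.Walk.support_cons] at hw'sup
              simp only [List.mem_cons, not_or] at hw'sup
              obtain ⟨hw'x₀, _, hw'p₂⟩ := hw'sup
              have hadjw'u : (GJ J).Adj w' u := GJ_adj hdiag (Sym2.eq_swap ▸ he)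
              have hadjux₁ : (GJ J).Adj u x₁ := GJ_adj hdiag (Sym2.eq_swap ▸ huJ)
              have hq : (SimpleGraph.Walk.cons hadjw'u (SimpleGraph.Walk.cons hadjux₁
                  (SimpleGraph.Walk.cons h₁ p₂))).IsPath := by
                rw [SimpleGraph.Walk.cons_isPath_iff]
                constructor
                · rw [SimpleGraph.Walk.cons_isPath_iff]
                  refine ⟨hinner, ?_⟩
                  rw [SimpleGraph.Walk.support_cons]
                  simp only [List.mem_cons, not_or]
                  exact ⟨hux₁, hup₂⟩
                · rw [SimpleGraph.Walk.support_cons, SimpleGraph.Walk.support_cons]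
                  simp only [List.mem_cons, not_or]
                  exact ⟨hw'u, hw'x₁, hw'p₂⟩
              have := hmax _ _ _ hq
              simp at this
      -- conclusion: x₁ is a suitable vertex
      refine ⟨x₁, ⟨s(x₁, x₀), ?_⟩, ?_⟩
      · rw [Lv, Finset.mem_filter]
        refine ⟨Sym2.eq_swap ▸ h₀.2, Sym2.mem_mk_left _ _, ?_⟩
        intro u hu hux₁
        rcases Sym2.mem_iff.1 hu with rfl | rfl
        · exact absurd rfl hux₁
        · exact hKey _ (Sym2.eq_swap ▸ h₀.2) hx₀x₂
      · have hsub : (J.filter (fun e => x₁ ∈ e)) \ Lv J x₁ ⊆ {s(x₁, x₂)} := by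
          intro e hee
          rw [Finset.mem_sdiff, Finset.mem_filter] at hee
          obtain ⟨⟨heJ, hx₁e⟩, hnotLv⟩ := hee
          obtain ⟨u, rfl⟩ := mem_sym2_exists hx₁e
          rw [Finset.mem_singleton]
          by_contra hne'
          apply hnotLv
          rw [Lv, Finset.mem_filter]
          refine ⟨heJ, Sym2.mem_mk_left _ _, ?_⟩
          intro u' hu' hu'x₁
          rcases Sym2.mem_iff.1 hu' with rfl | rfl
          · exact absurd rfl hu'x₁
          · exact hKey _ heJ (fun h => hne' (by rw [h]))
        exact (Finset.card_le_card hsub).trans (by simp)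

end Forest


/-- "odd or zero" -/
def Ok (n : ℕ) : Prop := n = 0 ∨ Odd n

/-- number of edges of color `i` at `v` within `S` -/
def cnt (S : Finset (Sym2 V)) (g : Sym2 V → Fin 4) (v : V) (i : Fin 4) : ℕ :=
  dS (S.filter (fun e => g e = i)) v

lemma cnt_le (S : Finset (Sym2 V)) (g : Sym2 V → Fin 4) (v : V) (i : Fin 4) :
    cnt S g v i ≤ dS S v := dS_mono (Finset.filter_subset _ _) v

lemma Ok_of_le_one {n : ℕ} (h : n ≤ 1) : Ok n := by
  interval_cases n
  · exact Or.inl rfl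
  · exact Or.inr ⟨0, rfl⟩

lemma cnt_congr (S : Finset (Sym2 V)) {g g' : Sym2 V → Fin 4}
    (h : ∀ e ∈ S, g e = g' e) (v : V) (i : Fin 4) : cnt S g v i = cnt S g' v i := by
  unfold cnt
  congr 1
  apply Finset.filter_congr
  intro e he
  rw [h e he]

lemma cnt_union {S T : Finset (Sym2 V)} (h : Disjoint S T) (g : Sym2 V → Fin 4)
    (v : V) (i : Fin 4) : cnt (S ∪ T) g v i = cnt S g v i + cnt T g v i := by
  unfold cnt
  rw [Finset.filter_union]
  exact dS_union_of_disjoint (Finset.disjoint_filter_filter h) v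

lemma forest2 {J : Finset (Sym2 V)} (hdiag : ∀ e ∈ J, ¬ e.IsDiag)
    (hstar : ∀ S ⊆ J, S.Nonempty → ∃ v, Odd (dS S v)) :
    ∃ g : Sym2 V → Fin 4, (∀ e ∈ J, g e = 1 ∨ g e = 2) ∧
      ∀ v, Ok (cnt J g v 1) ∧ Ok (cnt J g v 2) := by
  classical
  suffices h : ∀ n (J : Finset (Sym2 V)), J.card ≤ n → (∀ e ∈ J, ¬ e.IsDiag) →
      (∀ S ⊆ J, S.Nonempty → ∃ v, Odd (dS S v)) →
      ∃ g : Sym2 V → Fin 4, (∀ e ∈ J, g e = 1 ∨ g e = 2) ∧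
        ∀ v, Ok (cnt J g v 1) ∧ Ok (cnt J g v 2) by
    exact h J.card J le_rfl hdiag hstar
  intro n
  induction n with
  | zero =>
    intro J hcard _ _
    have hJ : J = ∅ := Finset.card_eq_zero.1 (Nat.le_zero.1 hcard)
    subst hJ
    exact ⟨fun _ => 1, by simp, fun v => by simp [cnt, dS_empty, Ok]⟩
  | succ n ih =>
    intro J hcard hdiag hstar
    rcases Finset.eq_empty_or_nonempty J with rfl | hne
    · exact ⟨fun _ => 1, by simp, fun v => by simp [cnt, dS_empty, Ok]⟩
    obtain ⟨v, hKne, hrest⟩ := penult hdiag hstar hne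
    set K := Lv J v with hK
    have hKsubJ : K ⊆ J := Finset.filter_subset _ _
    have hKv : ∀ e ∈ K, v ∈ e := fun e he => (Finset.mem_filter.1 he).2.1
    have hKleaf : ∀ e ∈ K, ∀ u ∈ e, u ≠ v → dS J u = 1 :=
      fun e he => (Finset.mem_filter.1 he).2.2
    set J' := J \ K with hJ'
    have hdisj : Disjoint J' K := Finset.sdiff_disjoint
    have hJsplit : J = J' ∪ K := by
      rw [hJ', Finset.sdiff_union_of_subset hKsubJ]
    have hJ'card : J'.card ≤ n := by
      have h1 : J'.card = J.card - K.card := by rw [hJ']; exact Finset.card_sdiff_of_subset hKsubJ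
      have h2 : 0 < K.card := Finset.card_pos.2 hKne
      have h3 : K.card ≤ J.card := Finset.card_le_card hKsubJ
      omega
    obtain ⟨g', hg'col, hg'ok⟩ := ih J' (by omega)
      (fun e he => hdiag e (Finset.mem_sdiff.1 he).1)
      (fun S hS hSne => hstar S (fun e he => (Finset.mem_sdiff.1 (hS he)).1) hSne)
    -- the degree of v in J' is at most 1
    have hdv' : dS J' v ≤ 1 := by
      have : J'.filter (fun e => v ∈ e) = (J.filter (fun e => v ∈ e)) \ K := by
        ext e
        simp only [hJ', Finset.mem_filter, Finset.mem_sdiff]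
        tauto
      unfold dS
      rw [this]
      have h2 : (J.filter (fun e => v ∈ e)) \ K ⊆ (J.filter (fun e => v ∈ e)) \ Lv J v := by
        rw [hK]
      exact (Finset.card_le_card h2).trans hrest
    set a := cnt J' g' v 1 with ha
    set b := cnt J' g' v 2 with hb
    have hab : a + b ≤ 1 := by
      have h1 : J'.filter (fun e => g' e = 1) ∪ J'.filter (fun e => g' e = 2) ⊆ J' :=
        Finset.union_subset (Finset.filter_subset _ _) (Finset.filter_subset _ _)
      have h2 : Disjoint (J'.filter (fun e => g' e = 1)) (J'.filter (fun e => g' e = 2)) := by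
        rw [Finset.disjoint_filter]
        rintro e _ h1' h2'
        rw [h1'] at h2'
        exact absurd h2' (by decide)
      calc a + b = dS (J'.filter (fun e => g' e = 1) ∪ J'.filter (fun e => g' e = 2)) v := 
            (dS_union_of_disjoint h2 v).symm
        _ ≤ dS J' v := dS_mono h1 v
        _ ≤ 1 := hdv'
    obtain ⟨estar, hestar⟩ := hKne
    set k := K.card with hkdef
    have hk1 : 1 ≤ k := Finset.card_pos.2 ⟨estar, hestar⟩
    -- choose which subset of K gets color 1
    set K₁ : Finset (Sym2 V) :=
      if a = 1 then (if Even k then K else ∅)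
      else if b = 1 then (if Even k then ∅ else K)
      else (if Even k then {estar} else K) with hK₁
    have hK₁sub : K₁ ⊆ K := by
      rw [hK₁]
      split_ifs <;>
        (first
          | exact subset_rfl
          | exact Finset.empty_subset _
          | exact Finset.singleton_subset_iff.2 hestar)
    set g : Sym2 V → Fin 4 := fun e => if e ∈ K₁ then 1 else if e ∈ K then 2 else g' e with hg
    have hgJ' : ∀ e ∈ J', g e = g' e := by
      intro e he
      have h1 : e ∉ K := Finset.disjoint_left.1 hdisj he
      rw [hg]
      simp only [if_neg (fun hc => h1 (hK₁sub hc)), if_neg h1]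
    refine ⟨g, ?_, ?_⟩
    · intro e he
      rw [hJsplit, Finset.mem_union] at he
      rcases he with he | he
      · rw [hgJ' e he]; exact hg'col e he
      · rw [hg]
        by_cases h1 : e ∈ K₁
        · simp [h1]
        · simp [h1, he]
    · intro u
      have hsplit : ∀ i, cnt J g u i = cnt J' g' u i + cnt K g u i := by
        intro i
        conv_lhs => rw [hJsplit]
        rw [cnt_union hdisj, cnt_congr J' hgJ']
      by_cases hu1 : dS J u ≤ 1
      · exact ⟨Ok_of_le_one ((cnt_le _ _ _ _).trans hu1),
          Ok_of_le_one ((cnt_le _ _ _ _).trans hu1)⟩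
      by_cases huv : u = v
      · subst huv
        have hcntK1 : cnt K g u 1 = K₁.card := by
          unfold cnt
          have heq : K.filter (fun e => g e = 1) = K₁ := by
            ext e
            rw [Finset.mem_filter]
            constructor
            · rintro ⟨heK, hge⟩
              by_contra hc
              rw [hg] at hge
              simp only [if_neg hc, if_pos heK] at hge
              exact absurd hge (by decide)
            · intro heK₁
              exact ⟨hK₁sub heK₁, by rw [hg]; simp [if_pos heK₁]⟩
          rw [heq]
          unfold dS
          rw [Finset.filter_true_of_mem (fun e he => hKv e (hK₁sub he))]
        have hcntK2 : cnt K g u 2 = k - K₁.card := by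
          unfold cnt
          have heq : K.filter (fun e => g e = 2) = K \ K₁ := by
            ext e
            rw [Finset.mem_filter, Finset.mem_sdiff]
            constructor
            · rintro ⟨heK, hge⟩
              refine ⟨heK, fun hc => ?_⟩
              rw [hg] at hge
              simp only [if_pos hc] at hge
              exact absurd hge (by decide)
            · rintro ⟨heK, hc⟩
              refine ⟨heK, ?_⟩
              rw [hg]
              simp [if_neg hc, if_pos heK]
          rw [heq]
          unfold dS
          rw [Finset.filter_true_of_mem (fun e he => hKv e (Finset.mem_sdiff.1 he).1),
            Finset.card_sdiff_of_subset hK₁sub]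
        have hc1 := hsplit 1
        have hc2 := hsplit 2
        rw [hcntK1] at hc1
        rw [hcntK2] at hc2
        rw [← ha] at hc1
        rw [← hb] at hc2
        have hOk : ∀ m : ℕ, m % 2 = 1 → Ok m := fun m hm => Or.inr (Nat.odd_iff.2 hm)
        have hOk0 : ∀ m : ℕ, m = 0 → Ok m := fun m hm => Or.inl hm
        by_cases ha1 : a = 1
        · have hb0 : b = 0 := by omega
          rcases Nat.even_or_odd k with hke | hko
          · have hKK : K₁ = K := by rw [hK₁, if_pos ha1, if_pos hke]
            have hkc : K₁.card = k := by rw [hKK]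
            constructor
            · refine hOk _ ?_
              rw [hc1, hkc, ha1]
              rw [Nat.even_iff] at hke
              omega
            · refine hOk0 _ ?_
              rw [hc2, hkc, hb0]
              omega
          · have hKK : K₁ = (∅ : Finset (Sym2 V)) := by rw [hK₁, if_pos ha1, if_neg (by
              rw [Nat.even_iff]; rw [Nat.odd_iff] at hko; omega)]
            have hkc : K₁.card = 0 := by rw [hKK]; simp
            constructor
            · exact hOk _ (by rw [hc1, hkc, ha1])
            · refine hOk _ ?_
              rw [hc2, hkc, hb0]
              rw [Nat.odd_iff] at hko
              omega
        · by_cases hb1 : b = 1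
          · have ha0 : a = 0 := by omega
            rcases Nat.even_or_odd k with hke | hko
            · have hKK : K₁ = (∅ : Finset (Sym2 V)) := by
                rw [hK₁, if_neg ha1, if_pos hb1, if_pos hke]
              have hkc : K₁.card = 0 := by rw [hKK]; simp
              constructor
              · exact hOk0 _ (by rw [hc1, hkc, ha0])
              · refine hOk _ ?_
                rw [hc2, hkc, hb1]
                rw [Nat.even_iff] at hke
                omega
            · have hKK : K₁ = K := by
                rw [hK₁, if_neg ha1, if_pos hb1, if_neg (by
                  rw [Nat.even_iff]; rw [Nat.odd_iff] at hko; omega)]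
              have hkc : K₁.card = k := by rw [hKK]
              constructor
              · refine hOk _ ?_
                rw [hc1, hkc, ha0]
                rw [Nat.odd_iff] at hko
                omega
              · refine hOk _ ?_
                rw [hc2, hkc, hb1]
                omega
          · have ha0 : a = 0 := by omega
            have hb0 : b = 0 := by omega
            rcases Nat.even_or_odd k with hke | hko
            · have hKK : K₁ = ({estar} : Finset (Sym2 V)) := by
                rw [hK₁, if_neg ha1, if_neg hb1, if_pos hke]
              have hkc : K₁.card = 1 := by rw [hKK]; simp
              have hk2 : 2 ≤ k := by
                rcases hke with ⟨m, hm⟩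
                omega
              constructor
              · exact hOk _ (by rw [hc1, hkc, ha0])
              · refine hOk _ ?_
                rw [hc2, hkc, hb0]
                rw [Nat.even_iff] at hke
                omega
            · have hKK : K₁ = K := by
                rw [hK₁, if_neg ha1, if_neg hb1, if_neg (by
                  rw [Nat.even_iff]; rw [Nat.odd_iff] at hko; omega)]
              have hkc : K₁.card = k := by rw [hKK]
              constructor
              · refine hOk _ ?_
                rw [hc1, hkc, ha0]
                rw [Nat.odd_iff] at hko
                omega
              · exact hOk0 _ (by rw [hc2, hkc, hb0]; omega)
      · -- u ≠ v and u has at least two edges: u is incident to no edge of K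
        have hdSK : dS K u = 0 := by
          unfold dS
          rw [Finset.card_eq_zero, Finset.filter_eq_empty_iff]
          intro e he hue
          exact hu1 (le_of_eq (hKleaf e he u hue huv))
        have hKz : ∀ i, cnt K g u i = 0 := by
          intro i
          have := (cnt_le K g u i).trans (le_of_eq hdSK)
          omega
        constructor
        · rw [hsplit 1, hKz 1]
          simpa using (hg'ok u).1
        · rw [hsplit 2, hKz 2]
          simpa using (hg'ok u).2

lemma forest2_mono {J : Finset (Sym2 V)} {g : Sym2 V → Fin 4} {v : V}
    (hcol : ∀ e ∈ J, g e = 1 ∨ g e = 2) (h1 : Ok (cnt J g v 1)) (h2 : Ok (cnt J g v 2))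
    (hodd : Odd (dS J v)) : cnt J g v 1 = 0 ∨ cnt J g v 2 = 0 := by
  have hsum : cnt J g v 1 + cnt J g v 2 = dS J v := by
    have hdisj : Disjoint (J.filter (fun e => g e = 1)) (J.filter (fun e => g e = 2)) := by
      rw [Finset.disjoint_filter]
      rintro e _ h1' h2'
      rw [h1'] at h2'
      exact absurd h2' (by decide)
    have hun : J.filter (fun e => g e = 1) ∪ J.filter (fun e => g e = 2) = J := by
      ext e
      simp only [Finset.mem_union, Finset.mem_filter]
      constructor
      · rintro (⟨h, _⟩ | ⟨h, _⟩) <;> exact h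
      · intro he
        rcases hcol e he with h | h
        · exact Or.inl ⟨he, h⟩
        · exact Or.inr ⟨he, h⟩
    calc cnt J g v 1 + cnt J g v 2
        = dS (J.filter (fun e => g e = 1) ∪ J.filter (fun e => g e = 2)) v :=
          (dS_union_of_disjoint hdisj v).symm
      _ = dS J v := by rw [hun]
  rcases h1 with h1 | h1
  · exact Or.inl h1
  rcases h2 with h2 | h2
  · exact Or.inr h2
  exfalso
  rw [Nat.odd_iff] at h1 h2 hodd
  omega

variable {G : SimpleGraph V} [DecidableRel G.Adj]

lemma EA_mono {A B : Finset V} (h : B ⊆ A) : EA G B ⊆ EA G A := by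
  intro e he
  rw [mem_EA] at he ⊢
  obtain ⟨x, y, rfl, hadj, hx, hy⟩ := he
  exact ⟨x, y, rfl, hadj, h hx, h hy⟩

/-- the set of vertices of `A` with even degree inside `A` -/
noncomputable def TA (G : SimpleGraph V) [DecidableRel G.Adj] (A : Finset V) : Finset V :=
  A.filter (fun v => Even (dS (EA G A) v))

lemma TA_even {A : Finset V} (heven : Even A.card) : Even (TA G A).card := by
  have h1 := even_card_odd_dS (fun e (he : e ∈ EA G A) => EA_not_diag he)
  have h2 : (univ.filter (fun v => Odd (dS (EA G A) v)))
      = A.filter (fun v => Odd (dS (EA G A) v)) := by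
    ext v
    simp only [Finset.mem_filter, Finset.mem_univ, true_and]
    constructor
    · intro h
      refine ⟨?_, h⟩
      by_contra hc
      rw [dS_EA_eq_zero hc] at h
      have := Nat.odd_iff.1 h
      omega
    · exact fun h => h.2
  rw [h2] at h1
  have h4 : A.filter (fun v => Odd (dS (EA G A) v))
      = A.filter (fun v => ¬ Even (dS (EA G A) v)) := by
    apply Finset.filter_congr
    intro v _
    rw [Nat.even_iff, Nat.odd_iff]
    constructor
    · intro h; omega
    · intro h; omega
  have h3 : (TA G A).card + (A.filter (fun v => Odd (dS (EA G A) v))).card = A.card := by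
    rw [TA, h4]
    exact Finset.card_filter_add_card_filter_not (s := A)
      (p := fun v => Even (dS (EA G A) v))
  rcases h1 with ⟨m, hm⟩
  rcases heven with ⟨p, hp⟩
  exact ⟨p - m, by omega⟩

/-- Core of Case 1: a 3-colouring of the edges within `A`, where the forest part
may be confined to `B`. -/
lemma case1core (A B : Finset V) (hBA : B ⊆ A)
    (hconn : ∀ x ∈ A, ∀ y ∈ A, (RG G A).Reachable x y)
    (heven : Even A.card)
    (hTsub : TA G A ⊆ B)
    (hconnB : ∀ x ∈ TA G A, ∀ y ∈ TA G A, (RG G B).Reachable x y) :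
    ∃ f : Sym2 V → Fin 4,
      (∀ e ∈ EA G A, f e = 0 ∨ f e = 1 ∨ f e = 2) ∧
      (∀ v, ∀ i, Ok (cnt (EA G A) f v i)) ∧
      (∀ v, cnt (EA G A) f v 3 = 0) ∧
      (∀ v, v ∉ B → cnt (EA G A) f v 1 = 0 ∧ cnt (EA G A) f v 2 = 0) ∧
      (∀ v ∈ TA G A, cnt (EA G A) f v 1 = 0 ∨ cnt (EA G A) f v 2 = 0) := by
  classical
  rcases Finset.eq_empty_or_nonempty (EA G A) with hEA | hEAne
  · refine ⟨fun _ => 0, ?_, ?_, ?_, ?_, ?_⟩ <;>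
      simp [hEA, cnt, dS_empty, Ok]
  -- no isolated vertices
  have hnoiso : ∀ v ∈ A, 0 < dS (EA G A) v := by
    intro v hv
    obtain ⟨e, he⟩ := hEAne
    have hediag := EA_not_diag he
    obtain ⟨x, y, rfl, hadj, hx, hy⟩ := mem_EA.1 he
    have hu : ∃ u ∈ A, u ≠ v := by
      by_cases hvx : v = x
      · subst hvx
        exact ⟨y, hy, hadj.ne'⟩
      · exact ⟨x, hx, fun h => hvx h.symm⟩
    obtain ⟨u, hu, huv⟩ := hu
    obtain ⟨p⟩ := hconn v hv u hu
    cases p with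
    | nil => exact absurd rfl huv
    | @cons _ w _ hadj' p' =>
      have : s(v, w) ∈ EA G A := by
        rw [mem_EA]
        exact ⟨v, w, rfl, hadj'.1, hadj'.2.1, hadj'.2.2⟩
      unfold dS
      rw [Finset.card_pos]
      exact ⟨_, Finset.mem_filter.2 ⟨this, Sym2.mem_mk_left _ _⟩⟩
  obtain ⟨J, hJsub, hJpar, hJstar⟩ := tjoin_min (H := RG G B) (TA G A) hconnB (TA_even heven)
  have hJEA : J ⊆ EA G A := fun e he => EA_mono hBA (hJsub e he)
  have hJdiag : ∀ e ∈ J, ¬ e.IsDiag := fun e he => EA_not_diag (hJsub e he)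
  obtain ⟨g, hgcol, hgok⟩ := forest2 hJdiag hJstar
  set f : Sym2 V → Fin 4 := fun e => if e ∈ J then g e else 0 with hf
  have hfe' : ∀ e, f e = if e ∈ J then g e else 0 := fun e => rfl
  have hfil0 : (EA G A).filter (fun e => f e = 0) = EA G A \ J := by
    ext e
    simp only [Finset.mem_filter, Finset.mem_sdiff, hfe']
    constructor
    · rintro ⟨he, hfe⟩
      refine ⟨he, fun hc => ?_⟩
      rw [if_pos hc] at hfe
      rcases hgcol e hc with h | h <;> rw [h] at hfe <;> exact absurd hfe (by decide)
    · rintro ⟨he, hc⟩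
      exact ⟨he, by rw [if_neg hc]⟩
  have hfil12 : ∀ i : Fin 4, i = 1 ∨ i = 2 →
      (EA G A).filter (fun e => f e = i) = J.filter (fun e => g e = i) := by
    intro i hi
    ext e
    simp only [Finset.mem_filter, hfe']
    constructor
    · rintro ⟨he, hfe⟩
      by_cases hc : e ∈ J
      · rw [if_pos hc] at hfe
        exact ⟨hc, hfe⟩
      · rw [if_neg hc] at hfe
        rcases hi with rfl | rfl <;> exact absurd hfe.symm (by decide)
    · rintro ⟨he, hge⟩
      exact ⟨hJEA he, by rw [if_pos he, hge]⟩
  have hfil3 : (EA G A).filter (fun e => f e = 3) = ∅ := by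
    rw [Finset.filter_eq_empty_iff]
    intro e he
    rw [hfe']
    by_cases hc : e ∈ J
    · rw [if_pos hc]
      rcases hgcol e hc with h | h <;> rw [h] <;> decide
    · rw [if_neg hc]; decide
  have hcnt0 : ∀ v, cnt (EA G A) f v 0 = dS (EA G A) v - dS J v := by
    intro v
    unfold cnt
    rw [hfil0, dS_sdiff hJEA]
  have hcnt12 : ∀ i : Fin 4, i = 1 ∨ i = 2 → ∀ v, cnt (EA G A) f v i = cnt J g v i := by
    intro i hi v
    unfold cnt
    rw [hfil12 i hi]
  have hcnt3 : ∀ v, cnt (EA G A) f v 3 = 0 := by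
    intro v
    unfold cnt
    rw [hfil3, dS_empty]
  refine ⟨f, ?_, ?_, hcnt3, ?_, ?_⟩
  · intro e he
    rw [hfe']
    by_cases hc : e ∈ J
    · rw [if_pos hc]
      rcases hgcol e hc with h | h <;> rw [h] <;> simp
    · rw [if_neg hc]; simp
  · intro v i
    fin_cases i
    · -- color 0
      show Ok (cnt (EA G A) f v 0)
      rw [hcnt0]
      by_cases hvA : v ∈ A
      · have h1 := hnoiso v hvA
        have h2 : dS J v ≤ dS (EA G A) v := dS_mono hJEA v
        have h3 := hJpar v
        right
        rw [Nat.odd_iff]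
        by_cases hvT : v ∈ TA G A
        · have h4 : Odd (dS J v) := h3.2 hvT
          have h5 : Even (dS (EA G A) v) := (Finset.mem_filter.1 hvT).2
          rw [Nat.odd_iff] at h4
          rw [Nat.even_iff] at h5
          omega
        · have h4 : ¬ Odd (dS J v) := fun hc => hvT (h3.1 hc)
          have h5 : ¬ Even (dS (EA G A) v) := by
            intro hc
            exact hvT (Finset.mem_filter.2 ⟨hvA, hc⟩)
          rw [Nat.odd_iff] at h4
          rw [Nat.even_iff] at h5
          omega
      · left
        rw [dS_EA_eq_zero hvA]
        have : dS J v ≤ dS (EA G A) v := dS_mono hJEA v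
        omega
    · show Ok (cnt (EA G A) f v 1)
      rw [hcnt12 1 (Or.inl rfl)]
      exact (hgok v).1
    · show Ok (cnt (EA G A) f v 2)
      rw [hcnt12 2 (Or.inr rfl)]
      exact (hgok v).2
    · show Ok (cnt (EA G A) f v 3)
      rw [hcnt3]
      exact Or.inl rfl
  · intro v hvB
    have hdJ : dS J v = 0 := by
      have h1 : dS J v ≤ dS (EA G B) v := dS_mono (fun e he => hJsub e he) v
      rw [dS_EA_eq_zero hvB] at h1
      omega
    constructor
    · rw [hcnt12 1 (Or.inl rfl)]
      have := (cnt_le J g v 1).trans (le_of_eq hdJ)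
      omega
    · rw [hcnt12 2 (Or.inr rfl)]
      have := (cnt_le J g v 2).trans (le_of_eq hdJ)
      omega
  · intro v hvT
    rw [hcnt12 1 (Or.inl rfl), hcnt12 2 (Or.inr rfl)]
    exact forest2_mono hgcol (hgok v).1 (hgok v).2 ((hJpar v).2 hvT)

def walk_transfer_subset {A B : Finset V} {a b : V} (q : (RG G A).Walk a b)
    (hsub : ∀ v ∈ q.support, v ∈ B) : ((RG G B).Walk a b) := by
  refine q.transfer (RG G B) ?_
  intro e he
  have h1 : ∀ v ∈ e, v ∈ q.support := by
    intro v hv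
    induction e with
    | _ c d =>
      rcases Sym2.mem_iff.1 hv with rfl | rfl
      · exact q.fst_mem_support_of_mem_edges he
      · exact q.snd_mem_support_of_mem_edges he
  have h2 := q.edges_subset_edgeSet he
  induction e with
  | _ c d =>
    rw [SimpleGraph.mem_edgeSet] at h2 ⊢
    exact ⟨h2.1, hsub c (h1 c (Sym2.mem_mk_left _ _)),
      hsub d (h1 d (Sym2.mem_mk_right _ _))⟩

lemma reach_in_of_support {B : Finset V} {a b : V} (q : (RG G B).Walk a b) {t : V}
    (ht : t ∈ q.support) : (RG G B).Reachable t b := by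
  classical
  exact ⟨q.dropUntil t ht⟩

lemma support_mem {B : Finset V} {a b : V} (q : (RG G B).Walk a b) (ha : a ∈ B) :
    ∀ v ∈ q.support, v ∈ B := by
  induction q with
  | nil =>
    intro v hv
    rw [SimpleGraph.Walk.support_nil, List.mem_singleton] at hv
    exact hv ▸ ha
  | cons hadj q' ih =>
    intro v hv
    rw [SimpleGraph.Walk.support_cons, List.mem_cons] at hv
    rcases hv with rfl | hv
    · exact ha
    · exact ih hadj.2.2 v hv

/-- deleting the endpoint of a maximal path preserves connectivity -/
lemma erase_endpoint_conn {A : Finset V}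
    (hconn : ∀ x ∈ A, ∀ y ∈ A, (RG G A).Reachable x y)
    {x₀ yend : V} (p : (RG G A).Walk x₀ yend) (hp : p.IsPath) (hlen : 1 ≤ p.length)
    (hmax : ∀ (a b : V) (q : (RG G A).Walk a b), q.IsPath → q.length ≤ p.length) :
    ∀ t ∈ A.erase x₀, ∀ t' ∈ A.erase x₀, (RG G (A.erase x₀)).Reachable t t' := by
  classical
  cases p with
  | nil => simp at hlen
  | @cons _ x₁ _ h₀ p₁ =>
    have hp₁ : p₁.IsPath := ((SimpleGraph.Walk.cons_isPath_iff h₀ p₁).1 hp).1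
    have hx₀p₁ : x₀ ∉ p₁.support := ((SimpleGraph.Walk.cons_isPath_iff h₀ p₁).1 hp).2
    have hx₀A : x₀ ∈ A := h₀.2.1
    have hx₁A : x₁ ∈ A := h₀.2.2
    have hx₁x₀ : x₁ ≠ x₀ := h₀.ne'
    -- all neighbours of x₀ lie on the path
    have hN : ∀ w, (RG G A).Adj x₀ w →
        w ∈ (SimpleGraph.Walk.cons h₀ p₁).support := by
      intro w hadj
      by_contra hc
      have hq : (SimpleGraph.Walk.cons hadj.symm (SimpleGraph.Walk.cons h₀ p₁)).IsPath := by
        rw [SimpleGraph.Walk.cons_isPath_iff]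
        exact ⟨hp, hc⟩
      have := hmax _ _ _ hq
      simp at this
    -- the vertices of p₁ are reachable from x₁ avoiding x₀
    have htail : ∀ t ∈ p₁.support, (RG G (A.erase x₀)).Reachable x₁ t := by
      intro t ht
      refine ⟨walk_transfer_subset (p₁.takeUntil t ht) ?_⟩
      intro v hv
      have h1 := SimpleGraph.Walk.support_takeUntil_subset _ ht hv
      exact Finset.mem_erase.2 ⟨fun hc => hx₀p₁ (hc ▸ h1), support_mem p₁ hx₁A v h1⟩
    have hmain : ∀ t, (RG G A).Reachable x₁ t →
        t = x₀ ∨ (RG G (A.erase x₀)).Reachable x₁ t := by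
      intro t ht
      rw [SimpleGraph.reachable_iff_reflTransGen] at ht
      induction ht with
      | refl => exact Or.inr (SimpleGraph.Reachable.refl x₁)
      | @tail b t hrtg hadj ih =>
        rcases ih with rfl | hreach
        · -- b = x₀ : t is a neighbour of x₀, hence on the path
          have hsup := hN t hadj
          rw [SimpleGraph.Walk.support_cons, List.mem_cons] at hsup
          rcases hsup with rfl | hsup
          · exact absurd rfl hadj.ne'
          · exact Or.inr (htail t hsup)
        · by_cases htx₀ : t = x₀
          · exact Or.inl htx₀
          · have hbx₀ : b ≠ x₀ := by
              rcases reach_mem hreach with rfl | ⟨_, hb⟩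
              · exact hx₁x₀
              · exact (Finset.mem_erase.1 hb).1
            refine Or.inr (hreach.trans ?_)
            exact SimpleGraph.Adj.reachable
              ⟨hadj.1, Finset.mem_erase.2 ⟨hbx₀, hadj.2.1⟩,
                Finset.mem_erase.2 ⟨htx₀, hadj.2.2⟩⟩
    intro t ht t' ht'
    have h1 := hmain t (hconn x₁ hx₁A t (Finset.mem_of_mem_erase ht))
    have h2 := hmain t' (hconn x₁ hx₁A t' (Finset.mem_of_mem_erase ht'))
    rcases h1 with rfl | h1
    · exact absurd rfl (Finset.mem_erase.1 ht).1
    rcases h2 with rfl | h2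
    · exact absurd rfl (Finset.mem_erase.1 ht').1
    exact h1.symm.trans h2

lemma nbrs_on_path {A : Finset V} {x₀ yend : V} (p : (RG G A).Walk x₀ yend) (hp : p.IsPath)
    (hmax : ∀ (a b : V) (q : (RG G A).Walk a b), q.IsPath → q.length ≤ p.length) :
    (∀ w, (RG G A).Adj x₀ w → w ∈ p.support) ∧
      (∀ w, (RG G A).Adj yend w → w ∈ p.support) := by
  constructor
  · intro w hadj
    by_contra hc
    have hq : (SimpleGraph.Walk.cons hadj.symm p).IsPath := by
      rw [SimpleGraph.Walk.cons_isPath_iff]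
      exact ⟨hp, hc⟩
    have := hmax _ _ _ hq
    simp at this
  · intro w hadj
    by_contra hc
    have hq : (SimpleGraph.Walk.cons hadj.symm p.reverse).IsPath := by
      rw [SimpleGraph.Walk.cons_isPath_iff]
      refine ⟨hp.reverse, ?_⟩
      rw [SimpleGraph.Walk.support_reverse, List.mem_reverse]
      exact hc
    have := hmax _ _ _ hq
    rw [SimpleGraph.Walk.length_cons, SimpleGraph.Walk.length_reverse] at this
    omega

open Classical in
noncomputable def BadSet (G : SimpleGraph V) [DecidableRel G.Adj]
    (A : Finset V) (x₀ x₁ x₂ : V) : Finset V :=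
  ((A.erase x₀).erase x₁).filter
    (fun q => ¬ (RG G ((A.erase x₀).erase x₁)).Reachable q x₂)

lemma not_bad_reach {A : Finset V} {x₀ x₁ x₂ t : V} (ht : t ∈ (A.erase x₀).erase x₁)
    (hnb : t ∉ BadSet G A x₀ x₁ x₂) :
    (RG G ((A.erase x₀).erase x₁)).Reachable t x₂ := by
  by_contra hc
  exact hnb (Finset.mem_filter.2 ⟨ht, hc⟩)

lemma bad_mem {A : Finset V} {x₀ x₁ x₂ t : V} (ht : t ∈ BadSet G A x₀ x₁ x₂) :
    t ∈ (A.erase x₀).erase x₁ ∧ ¬ (RG G ((A.erase x₀).erase x₁)).Reachable t x₂ := by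
  exact ⟨(Finset.mem_filter.1 ht).1, (Finset.mem_filter.1 ht).2⟩

/-- conclusion of the good pair lemma -/
def GP (G : SimpleGraph V) [DecidableRel G.Adj] (A : Finset V) : Prop :=
  ∃ z ∈ A,
    (∀ t ∈ A.erase z, ∀ t' ∈ A.erase z, (RG G (A.erase z)).Reachable t t') ∧
    (Odd (dS (EA G A) z) ∨
      ∃ w, (RG G A).Adj z w ∧
        (∀ t ∈ (A.erase z).erase w, ∀ t' ∈ (A.erase z).erase w,
          (RG G ((A.erase z).erase w)).Reachable t t'))

lemma gp_empty (A : Finset V)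
    (hconn : ∀ x ∈ A, ∀ y ∈ A, (RG G A).Reachable x y)
    {x₀ x₁ x₂ yend : V} (h01 : (RG G A).Adj x₀ x₁) (h12 : (RG G A).Adj x₁ x₂)
    (p₂ : (RG G A).Walk x₂ yend)
    (hp : (SimpleGraph.Walk.cons h01 (SimpleGraph.Walk.cons h12 p₂)).IsPath)
    (hmax : ∀ (a b : V) (q : (RG G A).Walk a b), q.IsPath → q.length ≤ p₂.length + 2)
    (hBE : BadSet G A x₀ x₁ x₂ = ∅) : GP G A := by
  have hmax' : ∀ (a b : V) (q : (RG G A).Walk a b), q.IsPath →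
      q.length ≤ (SimpleGraph.Walk.cons h01 (SimpleGraph.Walk.cons h12 p₂)).length := by
    intro a b q hq
    simpa using hmax a b q hq
  refine ⟨x₀, h01.2.1, ?_, Or.inr ⟨x₁, h01, ?_⟩⟩
  · exact erase_endpoint_conn hconn _ hp (by simp) hmax'
  · intro t ht t' ht'
    have h1 := not_bad_reach (G := G) ht (by rw [hBE]; exact Finset.notMem_empty _)
    have h2 := not_bad_reach (G := G) ht' (by rw [hBE]; exact Finset.notMem_empty _)
    exact h1.trans h2.symm

lemma gp_aux (A : Finset V)
    (hconn : ∀ x ∈ A, ∀ y ∈ A, (RG G A).Reachable x y) :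
    ∀ (n : ℕ) (x₀ x₁ x₂ yend : V) (h01 : (RG G A).Adj x₀ x₁) (h12 : (RG G A).Adj x₁ x₂)
      (p₂ : (RG G A).Walk x₂ yend)
      (hp : (SimpleGraph.Walk.cons h01 (SimpleGraph.Walk.cons h12 p₂)).IsPath)
      (hmax : ∀ (a b : V) (q : (RG G A).Walk a b), q.IsPath → q.length ≤ p₂.length + 2),
      (BadSet G A x₀ x₁ x₂).card ≤ n → GP G A := by
  intro n
  induction n with
  | zero =>
    intro x₀ x₁ x₂ yend h01 h12 p₂ hp hmax hcard
    exact gp_empty A hconn h01 h12 p₂ hp hmax (Finset.card_eq_zero.1 (Nat.le_zero.1 hcard))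
  | succ n ih =>
    intro x₀ x₁ x₂ yend h01 h12 p₂ hp hmax hcard
    rcases Finset.eq_empty_or_nonempty (BadSet G A x₀ x₁ x₂) with hBE | hBne
    · exact gp_empty A hconn h01 h12 p₂ hp hmax hBE
    set p := SimpleGraph.Walk.cons h01 (SimpleGraph.Walk.cons h12 p₂) with hpdef
    have hmax' : ∀ (a b : V) (q : (RG G A).Walk a b), q.IsPath → q.length ≤ p.length := by
      intro a b q hq
      simpa [hpdef] using hmax a b q hq
    obtain ⟨hN, _⟩ := nbrs_on_path p hp hmax'
    -- basic facts
    have hx₀A : x₀ ∈ A := h01.2.1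
    have hx₁A : x₁ ∈ A := h01.2.2
    have hx₂A : x₂ ∈ A := h12.2.2
    have hinner : (SimpleGraph.Walk.cons h12 p₂).IsPath :=
      ((SimpleGraph.Walk.cons_isPath_iff h01 _).1 hp).1
    have hx₀sup : x₀ ∉ (SimpleGraph.Walk.cons h12 p₂).support :=
      ((SimpleGraph.Walk.cons_isPath_iff h01 _).1 hp).2
    have hp₂ : p₂.IsPath := ((SimpleGraph.Walk.cons_isPath_iff h12 p₂).1 hinner).1
    have hx₁p₂ : x₁ ∉ p₂.support := ((SimpleGraph.Walk.cons_isPath_iff h12 p₂).1 hinner).2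
    have hx₀x₁ : x₀ ≠ x₁ := h01.ne
    have hx₁x₂ : x₁ ≠ x₂ := h12.ne
    have hx₀x₂ : x₀ ≠ x₂ := by
      intro h
      exact hx₀sup (by rw [SimpleGraph.Walk.support_cons, h]
                       exact List.mem_cons_of_mem _ p₂.start_mem_support)
    have hx₀p₂ : x₀ ∉ p₂.support := by
      intro h
      exact hx₀sup (by rw [SimpleGraph.Walk.support_cons]; exact List.mem_cons_of_mem _ h)
    have hx₂A2 : x₂ ∈ (A.erase x₀).erase x₁ :=
      Finset.mem_erase.2 ⟨fun h => hx₁x₂ h.symm, Finset.mem_erase.2 ⟨fun h => hx₀x₂ h.symm, hx₂A⟩⟩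
    -- the vertices of p₂ are good
    have hGood2 : ∀ t ∈ p₂.support, (RG G ((A.erase x₀).erase x₁)).Reachable t x₂ := by
      intro t ht
      have hsub : ∀ v ∈ (p₂.takeUntil t ht).support, v ∈ (A.erase x₀).erase x₁ := by
        intro v hv
        have h1 := SimpleGraph.Walk.support_takeUntil_subset _ ht hv
        have h2 : v ∈ A := support_mem p₂ hx₂A v h1
        exact Finset.mem_erase.2 ⟨fun hc => hx₁p₂ (hc ▸ h1),
          Finset.mem_erase.2 ⟨fun hc => hx₀p₂ (hc ▸ h1), h2⟩⟩
      exact SimpleGraph.Reachable.symm ⟨walk_transfer_subset (p₂.takeUntil t ht) hsub⟩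
    -- if deg x₀ = 1 we are done via the odd branch
    by_cases hdeg : dS (EA G A) x₀ = 1
    · refine ⟨x₀, hx₀A, erase_endpoint_conn hconn _ hp (by simp [hpdef]) hmax', Or.inl ?_⟩
      rw [hdeg]
      exact ⟨0, rfl⟩
    · -- x₀ has a second neighbour on the path, in p₂.support
      have hedge1 : s(x₀, x₁) ∈ EA G A := by
        rw [mem_EA]; exact ⟨x₀, x₁, rfl, h01.1, hx₀A, hx₁A⟩
      have hdeg2 : 2 ≤ dS (EA G A) x₀ := by
        have h1 : 1 ≤ dS (EA G A) x₀ := by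
          unfold dS
          rw [Nat.succ_le_iff, Finset.card_pos]
          exact ⟨s(x₀, x₁), Finset.mem_filter.2 ⟨hedge1, Sym2.mem_mk_left _ _⟩⟩
        omega
      obtain ⟨n', hn'A, hn'p₂⟩ : ∃ n', (RG G A).Adj x₀ n' ∧ n' ∈ p₂.support := by
        have h2 : 2 ≤ (Finset.filter (fun e => x₀ ∈ e) (EA G A)).card := hdeg2
        obtain ⟨e1, he1, e2, he2, hne⟩ := Finset.one_lt_card.1 h2
        have key : ∀ e ∈ Finset.filter (fun e => x₀ ∈ e) (EA G A), e ≠ s(x₀, x₁) →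
            ∃ n', (RG G A).Adj x₀ n' ∧ n' ∈ p₂.support := by
          intro e he hnee
          obtain ⟨heEA, hx₀e⟩ := Finset.mem_filter.1 he
          obtain ⟨u, rfl⟩ := mem_sym2_exists hx₀e
          have hadj : (RG G A).Adj x₀ u := by
            rw [mem_EA] at heEA
            obtain ⟨x, y, hxy, hadj', hx, hy⟩ := heEA
            rw [Sym2.eq_iff] at hxy
            rcases hxy with ⟨rfl, rfl⟩ | ⟨rfl, rfl⟩
            · exact ⟨hadj', hx, hy⟩
            · exact ⟨hadj'.symm, hy, hx⟩
          have hux₁ : u ≠ x₁ := by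
            intro h
            exact hnee (by rw [h])
          have husup := hN u hadj
          rw [hpdef, SimpleGraph.Walk.support_cons, SimpleGraph.Walk.support_cons] at husup
          rcases List.mem_cons.1 husup with rfl | husup'
          · exact absurd rfl hadj.ne
          rcases List.mem_cons.1 husup' with rfl | husup''
          · exact absurd rfl hux₁
          exact ⟨u, hadj, husup''⟩
        by_cases h1 : e1 = s(x₀, x₁)
        · exact key e2 he2 (by rw [h1] at hne; exact fun hc => hne hc.symm)
        · exact key e1 he1 h1
      -- find a bad neighbour y of x₁ off the path
      obtain ⟨y, hyBad, hyadj, hysup⟩ :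
          ∃ y, y ∈ BadSet G A x₀ x₁ x₂ ∧ (RG G A).Adj x₁ y ∧ y ∉ p.support := by
        obtain ⟨t₀, ht₀⟩ := hBne
        obtain ⟨ht₀A2, ht₀bad⟩ := bad_mem (G := G) ht₀
        have hclaim : ∀ t, (RG G A).Reachable x₂ t →
            ((t = x₀ ∨ t = x₁) ∨ (t ∈ (A.erase x₀).erase x₁ ∧
              (RG G ((A.erase x₀).erase x₁)).Reachable t x₂)) ∨
            (∃ y, y ∈ BadSet G A x₀ x₁ x₂ ∧ (RG G A).Adj x₁ y ∧ y ∉ p.support) := by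
          intro t ht
          rw [SimpleGraph.reachable_iff_reflTransGen] at ht
          induction ht with
          | refl => exact Or.inl (Or.inr ⟨hx₂A2, SimpleGraph.Reachable.refl x₂⟩)
          | @tail b t hrtg hadj ih =>
            rcases ih with (hb | ⟨hbA2, hbreach⟩) | hy
            · -- b = x₀ or b = x₁
              by_cases htx : t = x₀ ∨ t = x₁
              · exact Or.inl (Or.inl htx)
              push_neg at htx
              rcases hb with hb | hb
              · -- neighbour of x₀ : on the path
                have hadj' : (RG G A).Adj x₀ t := hb ▸ hadj
                have hsup := hN t hadj'
                rw [hpdef, SimpleGraph.Walk.support_cons, SimpleGraph.Walk.support_cons] at hsup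
                rcases List.mem_cons.1 hsup with heq | hsup'
                · exact absurd heq htx.1
                rcases List.mem_cons.1 hsup' with heq | hsup''
                · exact absurd heq htx.2
                refine Or.inl (Or.inr ⟨?_, hGood2 t hsup''⟩)
                exact Finset.mem_erase.2 ⟨htx.2, Finset.mem_erase.2 ⟨htx.1, hadj'.2.2⟩⟩
              · -- neighbour of x₁
                have hadj' : (RG G A).Adj x₁ t := hb ▸ hadj
                have htA2 : t ∈ (A.erase x₀).erase x₁ :=
                  Finset.mem_erase.2 ⟨htx.2, Finset.mem_erase.2 ⟨htx.1, hadj'.2.2⟩⟩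
                by_cases htsup : t ∈ p.support
                · rw [hpdef, SimpleGraph.Walk.support_cons,
                    SimpleGraph.Walk.support_cons] at htsup
                  rcases List.mem_cons.1 htsup with heq | htsup'
                  · exact absurd heq htx.1
                  rcases List.mem_cons.1 htsup' with heq | htsup''
                  · exact absurd heq htx.2
                  exact Or.inl (Or.inr ⟨htA2, hGood2 t htsup''⟩)
                · by_cases htbad : t ∈ BadSet G A x₀ x₁ x₂
                  · exact Or.inr ⟨t, htbad, hadj', htsup⟩
                  · exact Or.inl (Or.inr ⟨htA2, not_bad_reach (G := G) htA2 htbad⟩)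
            · -- b is good
              by_cases htx : t = x₀ ∨ t = x₁
              · exact Or.inl (Or.inl htx)
              push_neg at htx
              have htA2 : t ∈ (A.erase x₀).erase x₁ :=
                Finset.mem_erase.2 ⟨htx.2, Finset.mem_erase.2 ⟨htx.1, hadj.2.2⟩⟩
              refine Or.inl (Or.inr ⟨htA2, SimpleGraph.Reachable.trans ?_ hbreach⟩)
              exact SimpleGraph.Adj.reachable ⟨hadj.1.symm, htA2, hbA2⟩
            · exact Or.inr hy
        rcases hclaim t₀ (hconn x₂ hx₂A t₀ (Finset.mem_of_mem_erase
            (Finset.mem_of_mem_erase ht₀A2))) with (hb | ⟨_, hreach⟩) | hy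
        · rcases hb with rfl | rfl
          · exact absurd (Finset.mem_erase.1 (Finset.mem_erase.1 ht₀A2).2).1 (by simp)
          · exact absurd (Finset.mem_erase.1 ht₀A2).1 (by simp)
        · exact absurd hreach ht₀bad
        · exact hy
      -- swap : new maximal path starting at y
      have hyA : y ∈ A := hyadj.2.2
      have hyx₁ : y ≠ x₁ := hyadj.ne'
      have hx₀supp : x₀ ∈ p.support := by
        rw [hpdef, SimpleGraph.Walk.support_cons]
        exact List.mem_cons_self
      have hyx₀ : y ≠ x₀ := fun h => hysup (h ▸ hx₀supp)
      have hx₂sup : x₂ ∈ p.support := by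
        rw [hpdef, SimpleGraph.Walk.support_cons, SimpleGraph.Walk.support_cons]
        exact List.mem_cons_of_mem _ (List.mem_cons_of_mem _ p₂.start_mem_support)
      have hyx₂ : y ≠ x₂ := fun h => hysup (h ▸ hx₂sup)
      have hyinner : y ∉ (SimpleGraph.Walk.cons h12 p₂).support := by
        intro h
        exact hysup (by rw [hpdef, SimpleGraph.Walk.support_cons]; exact List.mem_cons_of_mem _ h)
      have hyp₂ : y ∉ p₂.support := by
        intro h
        exact hyinner (by rw [SimpleGraph.Walk.support_cons]; exact List.mem_cons_of_mem _ h)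
      have hqpath : (SimpleGraph.Walk.cons hyadj.symm
          (SimpleGraph.Walk.cons h12 p₂)).IsPath := by
        rw [SimpleGraph.Walk.cons_isPath_iff]
        exact ⟨hinner, hyinner⟩
      -- the new bad set is strictly smaller
      have hsubset : BadSet G A y x₁ x₂ ⊆ (BadSet G A x₀ x₁ x₂).erase y := by
        intro t ht
        obtain ⟨htA2', htbad'⟩ := bad_mem (G := G) ht
        have hty : t ≠ y := (Finset.mem_erase.1 (Finset.mem_erase.1 htA2').2).1
        have htx₁ : t ≠ x₁ := (Finset.mem_erase.1 htA2').1
        have htA : t ∈ A := Finset.mem_of_mem_erase (Finset.mem_of_mem_erase htA2')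
        rw [Finset.mem_erase]
        refine ⟨hty, ?_⟩
        by_contra htnb
        -- transfer a good walk avoiding y
        have htrans : ∀ s ∈ (A.erase x₀).erase x₁,
            (RG G ((A.erase x₀).erase x₁)).Reachable s x₂ →
            (RG G ((A.erase y).erase x₁)).Reachable s x₂ := by
          intro s hs hreach
          obtain ⟨q⟩ := hreach
          refine ⟨walk_transfer_subset q ?_⟩
          intro v hv
          have hvA2 : v ∈ (A.erase x₀).erase x₁ := support_mem q hs v hv
          have hvy : v ≠ y := by
            intro h
            subst h
            exact (bad_mem (G := G) hyBad).2 (reach_in_of_support q hv)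
          exact Finset.mem_erase.2 ⟨(Finset.mem_erase.1 hvA2).1,
            Finset.mem_erase.2 ⟨hvy, Finset.mem_of_mem_erase
              (Finset.mem_of_mem_erase hvA2)⟩⟩
        by_cases htx₀ : t = x₀
        · -- x₀ reaches x₂ through its second neighbour n'
          have hn'A2 : n' ∈ (A.erase x₀).erase x₁ := by
            refine Finset.mem_erase.2 ⟨fun hc => hx₁p₂ (hc ▸ hn'p₂), ?_⟩
            exact Finset.mem_erase.2 ⟨fun hc => hx₀p₂ (hc ▸ hn'p₂), hn'A.2.2⟩
          have h1 : (RG G ((A.erase y).erase x₁)).Reachable n' x₂ :=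
            htrans n' hn'A2 (hGood2 n' hn'p₂)
          have h2 : (RG G ((A.erase y).erase x₁)).Adj t n' := by
            refine ⟨by rw [htx₀]; exact hn'A.1, ?_, ?_⟩
            · refine Finset.mem_erase.2 ⟨htx₁, Finset.mem_erase.2 ⟨?_, htA⟩⟩
              intro hc
              exact hyx₀ (by rw [← hc, htx₀])
            · exact Finset.mem_erase.2 ⟨fun hc => hx₁p₂ (hc ▸ hn'p₂),
                Finset.mem_erase.2 ⟨fun hc => hyp₂ (hc ▸ hn'p₂), hn'A.2.2⟩⟩
          exact htbad' ((SimpleGraph.Adj.reachable h2).trans h1)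
        · -- t was good in the old bad set
          have htA2 : t ∈ (A.erase x₀).erase x₁ :=
            Finset.mem_erase.2 ⟨htx₁, Finset.mem_erase.2 ⟨htx₀, htA⟩⟩
          exact htbad' (htrans t htA2 (not_bad_reach (G := G) htA2 htnb))
      have hcard' : (BadSet G A y x₁ x₂).card ≤ n := by
        have h1 : y ∈ BadSet G A x₀ x₁ x₂ := hyBad
        have h2 := Finset.card_le_card hsubset
        have h3 : ((BadSet G A x₀ x₁ x₂).erase y).card
            = (BadSet G A x₀ x₁ x₂).card - 1 := Finset.card_erase_of_mem h1
        have h4 : 0 < (BadSet G A x₀ x₁ x₂).card := Finset.card_pos.2 ⟨y, h1⟩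
        omega
      exact ih y x₁ x₂ yend hyadj.symm h12 p₂ hqpath
        (by intro a b q hq; exact hmax a b q hq) hcard'

lemma good_pair (A : Finset V)
    (hconn : ∀ x ∈ A, ∀ y ∈ A, (RG G A).Reachable x y)
    (hEA : (EA G A).Nonempty) (h3 : 3 ≤ A.card) : GP G A := by
  classical
  obtain ⟨x₀, yend, p, hp, hmax⟩ := exists_maximal_path (hEA : (RG G A).edgeFinset.Nonempty)
  have hlen1 : 1 ≤ p.length := by
    obtain ⟨a, b, hab⟩ := exists_edge (hEA : (RG G A).edgeFinset.Nonempty)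
    have := hmax a b (SimpleGraph.Walk.cons hab SimpleGraph.Walk.nil)
      ((SimpleGraph.Walk.cons_isPath_iff hab SimpleGraph.Walk.nil).2
        ⟨SimpleGraph.Walk.IsPath.nil, by simp [hab.ne]⟩)
    simpa using this
  cases p with
  | nil => simp at hlen1
  | @cons _ x₁ _ h₀ p₁ =>
    cases p₁ with
    | nil =>
      -- the maximal path is a single edge : A would have only two vertices
      exfalso
      obtain ⟨hN, hNe⟩ := nbrs_on_path _ hp hmax
      have hsupp : (SimpleGraph.Walk.cons h₀
          (SimpleGraph.Walk.nil : (RG G A).Walk yend yend)).support = [x₀, yend] := by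
        simp
      have hclaim : ∀ t, (RG G A).Reachable x₀ t → t = x₀ ∨ t = yend := by
        intro t ht
        rw [SimpleGraph.reachable_iff_reflTransGen] at ht
        induction ht with
        | refl => exact Or.inl rfl
        | @tail b t hrtg hadj ih =>
          rcases ih with hb | hb
          · have := hN t (hb ▸ hadj)
            rw [hsupp] at this
            simpa using this
          · have := hNe t (hb ▸ hadj)
            rw [hsupp] at this
            simpa using this
      have hx₀A : x₀ ∈ A := h₀.2.1
      have hyA : yend ∈ A := h₀.2.2
      have hne : ((A.erase x₀).erase yend).Nonempty := by
        rw [← Finset.card_pos, Finset.card_erase_of_mem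
          (Finset.mem_erase.2 ⟨h₀.ne', hyA⟩), Finset.card_erase_of_mem hx₀A]
        omega
      obtain ⟨t, ht⟩ := hne
      have htA : t ∈ A := Finset.mem_of_mem_erase (Finset.mem_of_mem_erase ht)
      rcases hclaim t (hconn x₀ hx₀A t htA) with rfl | rfl
      · exact absurd rfl (Finset.mem_erase.1 (Finset.mem_erase.1 ht).2).1
      · exact absurd rfl (Finset.mem_erase.1 ht).1
    | @cons _ x₂ _ h₁ p₂ =>
      refine gp_aux A hconn (BadSet G A x₀ x₁ x₂).card x₀ x₁ x₂ yend h₀ h₁ p₂ hp ?_ le_rfl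
      intro a b q hq
      have := hmax a b q hq
      simpa using this

lemma sym2_eq_of_mem {e : Sym2 V} {z v : V} (hz : z ∈ e) (hv : v ∈ e) (hne : z ≠ v) :
    e = s(z, v) := by
  induction e with
  | _ a b =>
    rcases Sym2.mem_iff.1 hz with rfl | rfl
    · rcases Sym2.mem_iff.1 hv with rfl | rfl
      · exact absurd rfl hne
      · rfl
    · rcases Sym2.mem_iff.1 hv with rfl | rfl
      · exact Sym2.eq_swap
      · exact absurd rfl hne

/-- star of z within A -/
noncomputable def SA (G : SimpleGraph V) [DecidableRel G.Adj] (A : Finset V) (z : V) :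
    Finset (Sym2 V) := (EA G A).filter (fun e => z ∈ e)

lemma EA_split (A : Finset V) (z : V) :
    EA G A = EA G (A.erase z) ∪ SA G A z ∧ Disjoint (EA G (A.erase z)) (SA G A z) := by
  constructor
  · rw [EA_erase, SA]
    ext e
    simp only [Finset.mem_union, Finset.mem_filter]
    by_cases hz : z ∈ e <;> tauto
  · rw [EA_erase, SA]
    rw [Finset.disjoint_left]
    intro e h1 h2
    exact (Finset.mem_filter.1 h1).2 (Finset.mem_filter.1 h2).2

lemma cnt_split (A : Finset V) (z : V) (f : Sym2 V → Fin 4) (v : V) (i : Fin 4) :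
    cnt (EA G A) f v i = cnt (EA G (A.erase z)) f v i + cnt (SA G A z) f v i := by
  obtain ⟨h1, h2⟩ := EA_split (G := G) A z
  conv_lhs => rw [h1]
  exact cnt_union h2 f v i

lemma dS_SA_z (A : Finset V) (z : V) : dS (SA G A z) z = dS (EA G A) z := by
  unfold dS SA
  congr 1
  ext e
  simp only [Finset.mem_filter]
  tauto

lemma SA_at_ne (A : Finset V) {z v : V} (hne : v ≠ z) :
    (SA G A z).filter (fun e => v ∈ e) ⊆ {s(z, v)} := by
  intro e he
  simp only [SA, Finset.mem_filter] at he
  rw [Finset.mem_singleton]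
  exact sym2_eq_of_mem he.1.2 he.2 (fun h => hne h.symm)

lemma dS_SA_ne (A : Finset V) {z v : V} (hne : v ≠ z) : dS (SA G A z) v ≤ 1 := by
  unfold dS
  exact (Finset.card_le_card (SA_at_ne A hne)).trans (by simp)

lemma EA_z_zero (A : Finset V) (z : V) (v : V) : dS (EA G (A.erase z)) z = 0 :=
  dS_EA_eq_zero (Finset.notMem_erase z A)

/-- construction A : a vertex z of odd degree whose removal keeps A connected -/
lemma starA_color (A : Finset V) (z : V) (hodd : Odd (dS (EA G A) z))
    (hconn' : ∀ t ∈ A.erase z, ∀ t' ∈ A.erase z, (RG G (A.erase z)).Reachable t t')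
    (heven' : Even (A.erase z).card) :
    ∃ f : Sym2 V → Fin 4, ∀ v i, Ok (cnt (EA G A) f v i) := by
  classical
  obtain ⟨f', hf'col, hf'ok, hf'3, _, _⟩ := case1core (G := G) (A.erase z) (A.erase z)
    subset_rfl hconn' heven' (Finset.filter_subset _ _)
    (fun x hx y hy => hconn' x (Finset.mem_filter.1 hx).1 y (Finset.mem_filter.1 hy).1)
  set f : Sym2 V → Fin 4 := fun e => if e ∈ SA G A z then 3 else f' e with hf
  have hfe : ∀ e, f e = if e ∈ SA G A z then 3 else f' e := fun e => rfl
  have hagree : ∀ e ∈ EA G (A.erase z), f e = f' e := by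
    intro e he
    rw [hfe, if_neg]
    exact Finset.disjoint_left.1 (EA_split (G := G) A z).2 he
  have hstar3 : ∀ i : Fin 4, (SA G A z).filter (fun e => f e = i)
      = if i = 3 then SA G A z else ∅ := by
    intro i
    split_ifs with hi
    · subst hi
      apply Finset.filter_true_of_mem
      intro e he
      rw [hfe, if_pos he]
    · rw [Finset.filter_eq_empty_iff]
      intro e he
      rw [hfe, if_pos he]
      exact fun hc => hi hc.symm
  refine ⟨f, fun v i => ?_⟩
  rw [cnt_split (G := G) A z f v i]
  rw [show cnt (EA G (A.erase z)) f v i = cnt (EA G (A.erase z)) f' v i from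
    cnt_congr _ hagree v i]
  by_cases hvz : v = z
  · subst hvz
    have hA'0 : ∀ j, cnt (EA G (A.erase v)) f' v j = 0 := by
      intro j
      have := (cnt_le (EA G (A.erase v)) f' v j).trans (le_of_eq (EA_z_zero (G := G) A v v))
      omega
    rw [hA'0, Nat.zero_add]
    unfold cnt
    rw [hstar3]
    by_cases hi : i = 3
    · rw [if_pos hi]
      rw [dS_SA_z]
      exact Or.inr hodd
    · rw [if_neg hi]
      simp [dS_empty, Ok]
  · unfold cnt
    rw [hstar3]
    by_cases hi : i = 3
    · subst hi
      rw [if_pos rfl]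
      have h1 : dS (SA G A z) v ≤ 1 := dS_SA_ne A hvz
      have h2 := hf'3 v
      unfold cnt at h2
      rw [h2]
      exact Ok_of_le_one (by omega)
    · rw [if_neg hi, dS_empty, Nat.add_zero]
      exact hf'ok v i

/-- construction X : an even-degree vertex z with a good partner w -/
lemma starX_color (A : Finset V) (z w : V) (hzw : (RG G A).Adj z w)
    (hEvenz : Even (dS (EA G A) z))
    (hconn' : ∀ t ∈ A.erase z, ∀ t' ∈ A.erase z, (RG G (A.erase z)).Reachable t t')
    (hconn'' : ∀ t ∈ (A.erase z).erase w, ∀ t' ∈ (A.erase z).erase w,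
        (RG G ((A.erase z).erase w)).Reachable t t')
    (heven' : Even (A.erase z).card) :
    ∃ f : Sym2 V → Fin 4, ∀ v i, Ok (cnt (EA G A) f v i) := by
  classical
  have hwA' : w ∈ A.erase z := Finset.mem_erase.2 ⟨hzw.ne', hzw.2.2⟩
  -- get a 3-colouring of A.erase z with a colour m ∈ {1,2} unused at w
  obtain ⟨f', m, hm12, hf'ok, hf'3, hm0⟩ :
      ∃ (f' : Sym2 V → Fin 4) (m : Fin 4), (m = 1 ∨ m = 2) ∧
        (∀ v i, Ok (cnt (EA G (A.erase z)) f' v i)) ∧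
        (∀ v, cnt (EA G (A.erase z)) f' v 3 = 0) ∧
        cnt (EA G (A.erase z)) f' w m = 0 := by
    by_cases hw : Even (dS (EA G (A.erase z)) w)
    · -- β : w has even degree in A' : it is in TA, hence misses one of 1, 2
      obtain ⟨f', _, hok, h3, _, hmono⟩ := case1core (G := G) (A.erase z) (A.erase z)
        subset_rfl hconn' heven' (Finset.filter_subset _ _)
        (fun x hx y hy => hconn' x (Finset.mem_filter.1 hx).1 y (Finset.mem_filter.1 hy).1)
      have hwT : w ∈ TA G (A.erase z) := Finset.mem_filter.2 ⟨hwA', hw⟩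
      rcases hmono w hwT with h | h
      · exact ⟨f', 1, Or.inl rfl, hok, h3, h⟩
      · exact ⟨f', 2, Or.inr rfl, hok, h3, h⟩
    · -- α : w has odd degree in A' : confine the forest to A' \ {w}
      have hTsub : TA G (A.erase z) ⊆ (A.erase z).erase w := by
        intro v hv
        obtain ⟨hvA', hvE⟩ := Finset.mem_filter.1 hv
        refine Finset.mem_erase.2 ⟨?_, hvA'⟩
        intro hc
        exact hw (hc ▸ hvE)
      obtain ⟨f', _, hok, h3, hout, _⟩ := case1core (G := G) (A.erase z) ((A.erase z).erase w)
        (Finset.erase_subset _ _) hconn' heven' hTsub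
        (fun x hx y hy => hconn'' x (hTsub hx) y (hTsub hy))
      exact ⟨f', 1, Or.inl rfl, hok, h3,
        (hout w (Finset.notMem_erase w _)).1⟩
  have hm3 : m ≠ 3 := by rcases hm12 with rfl | rfl <;> decide
  have hszw : s(z, w) ∈ SA G A z := by
    rw [SA, Finset.mem_filter]
    refine ⟨?_, Sym2.mem_mk_left _ _⟩
    rw [mem_EA]
    exact ⟨z, w, rfl, hzw.1, hzw.2.1, hzw.2.2⟩
  set f : Sym2 V → Fin 4 :=
    fun e => if e = s(z, w) then m else if e ∈ SA G A z then 3 else f' e with hf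
  have hfe : ∀ e, f e = if e = s(z, w) then m else if e ∈ SA G A z then 3 else f' e :=
    fun e => rfl
  have hagree : ∀ e ∈ EA G (A.erase z), f e = f' e := by
    intro e he
    have h1 : e ∉ SA G A z := Finset.disjoint_left.1 (EA_split (G := G) A z).2 he
    rw [hfe, if_neg (fun hc => h1 (by rw [hc]; exact hszw)), if_neg h1]
  have hstarfil : ∀ i : Fin 4, (SA G A z).filter (fun e => f e = i)
      = if i = m then {s(z, w)} else if i = 3 then (SA G A z).erase (s(z, w)) else ∅ := by
    intro i
    split_ifs with h1 h2
    · subst h1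
      ext e
      simp only [Finset.mem_filter, Finset.mem_singleton]
      constructor
      · rintro ⟨heS, hfei⟩
        by_contra hc
        rw [hfe, if_neg hc, if_pos heS] at hfei
        exact hm3 hfei.symm
      · rintro rfl
        exact ⟨hszw, by rw [hfe, if_pos rfl]⟩
    · subst h2
      ext e
      simp only [Finset.mem_filter, Finset.mem_erase]
      constructor
      · rintro ⟨heS, hfei⟩
        refine ⟨fun hc => ?_, heS⟩
        rw [hfe, if_pos hc] at hfei
        exact hm3 (hfei ▸ rfl)
      · rintro ⟨hne, heS⟩
        exact ⟨heS, by rw [hfe, if_neg hne, if_pos heS]⟩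
    · rw [Finset.filter_eq_empty_iff]
      intro e heS
      rw [hfe]
      by_cases hc : e = s(z, w)
      · rw [if_pos hc]
        exact fun hcc => h1 hcc.symm
      · rw [if_neg hc, if_pos heS]
        exact fun hcc => h2 hcc.symm
  have hcntSA : ∀ v i, cnt (SA G A z) f v i
      = dS (if i = m then {s(z, w)} else if i = 3 then (SA G A z).erase (s(z, w)) else ∅) v := by
    intro v i
    unfold cnt
    rw [hstarfil]
  refine ⟨f, fun v i => ?_⟩
  rw [cnt_split (G := G) A z f v i,
    show cnt (EA G (A.erase z)) f v i = cnt (EA G (A.erase z)) f' v i from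
      cnt_congr _ hagree v i, hcntSA]
  have herase_z : dS ((SA G A z).erase (s(z, w))) z = dS (SA G A z) z - 1 := by
    rw [Finset.erase_eq, dS_sdiff (Finset.singleton_subset_iff.2 hszw), dS_singleton,
      if_pos (Sym2.mem_mk_left _ _)]
  by_cases hvz : v = z
  · subst hvz
    have hA'0 : cnt (EA G (A.erase v)) f' v i = 0 := by
      have := (cnt_le (EA G (A.erase v)) f' v i).trans (le_of_eq (EA_z_zero (G := G) A v v))
      omega
    rw [hA'0, Nat.zero_add]
    by_cases him : i = m
    · rw [if_pos him, dS_singleton, if_pos (Sym2.mem_mk_left _ _)]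
      exact Or.inr ⟨0, rfl⟩
    · rw [if_neg him]
      by_cases hi3 : i = 3
      · rw [if_pos hi3, herase_z, dS_SA_z]
        have h1 : 1 ≤ dS (EA G A) v := by
          unfold dS
          rw [Nat.succ_le_iff, Finset.card_pos]
          refine ⟨s(v, w), ?_⟩
          rw [Finset.mem_filter]
          exact ⟨(Finset.mem_filter.1 hszw).1, Sym2.mem_mk_left _ _⟩
        rcases hEvenz with ⟨t, ht⟩
        refine Or.inr ?_
        rw [Nat.odd_iff]
        omega
      · rw [if_neg hi3, dS_empty]
        exact Or.inl rfl
  · by_cases hvw : v = w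
    · by_cases him : i = m
      · rw [if_pos him, dS_singleton, if_pos (by rw [hvw]; exact Sym2.mem_mk_right _ _),
          him, hvw, hm0]
        exact Or.inr ⟨0, rfl⟩
      · rw [if_neg him]
        by_cases hi3 : i = 3
        · rw [if_pos hi3]
          have hz0 : dS ((SA G A z).erase (s(z, w))) v = 0 := by
            unfold dS
            rw [Finset.card_eq_zero, Finset.filter_eq_empty_iff]
            intro e he hve
            obtain ⟨hne, heS⟩ := Finset.mem_erase.1 he
            have hzv : z ≠ v := fun h => hzw.ne (h.trans hvw)
            have := sym2_eq_of_mem (Finset.mem_filter.1 heS).2 hve hzv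
            exact hne (by rw [this, hvw])
          rw [hz0, hi3, hf'3]
          exact Or.inl rfl
        · rw [if_neg hi3, dS_empty, Nat.add_zero]
          exact hf'ok v i
    · by_cases him : i = m
      · rw [if_pos him, dS_singleton, if_neg (by
          rw [Sym2.mem_iff]
          rintro (rfl | rfl)
          · exact hvz rfl
          · exact hvw rfl), Nat.add_zero]
        exact hf'ok v i
      · rw [if_neg him]
        by_cases hi3 : i = 3
        · rw [if_pos hi3]
          have h1 : dS ((SA G A z).erase (s(z, w))) v ≤ 1 :=
            (dS_mono (Finset.erase_subset _ _) v).trans (dS_SA_ne A hvz)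
          rw [hi3, hf'3, Nat.zero_add]
          exact Ok_of_le_one h1
        · rw [if_neg hi3, dS_empty, Nat.add_zero]
          exact hf'ok v i

lemma comp_color (A : Finset V)
    (hconn : ∀ x ∈ A, ∀ y ∈ A, (RG G A).Reachable x y) :
    ∃ f : Sym2 V → Fin 4, ∀ v i, Ok (cnt (EA G A) f v i) := by
  classical
  rcases Finset.eq_empty_or_nonempty (EA G A) with hEA | hEAne
  · refine ⟨fun _ => 0, fun v i => ?_⟩
    unfold cnt
    rw [hEA]
    simp [dS_empty, Ok]
  rcases Nat.even_or_odd A.card with heven | hodd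
  · obtain ⟨f, _, hok, _, _, _⟩ := case1core (G := G) A A subset_rfl hconn heven
      (Finset.filter_subset _ _)
      (fun x hx y hy => hconn x (Finset.mem_filter.1 hx).1 y (Finset.mem_filter.1 hy).1)
    exact ⟨f, hok⟩
  · have h2 : 2 ≤ A.card := by
      obtain ⟨e, he⟩ := hEAne
      obtain ⟨x, y, rfl, hadj, hx, hy⟩ := mem_EA.1 he
      exact Finset.one_lt_card.2 ⟨x, hx, y, hy, hadj.ne⟩
    have h3 : 3 ≤ A.card := by
      rcases hodd with ⟨k, hk⟩
      omega
    obtain ⟨z, hzA, hconn', hbranch⟩ := good_pair A hconn hEAne h3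
    have heven' : Even (A.erase z).card := by
      rw [Finset.card_erase_of_mem hzA]
      rcases hodd with ⟨k, hk⟩
      exact ⟨k, by omega⟩
    by_cases hdz : Odd (dS (EA G A) z)
    · exact starA_color A z hdz hconn' heven'
    · rcases hbranch with hodd' | ⟨w, hzw, hconn''⟩
      · exact absurd hodd' hdz
      · exact starX_color A z w hzw (Nat.not_odd_iff_even.1 hdz) hconn' hconn'' heven'

def walk_to_RG {B : Finset V} {a b : V} (q : G.Walk a b)
    (hsub : ∀ v ∈ q.support, v ∈ B) : (RG G B).Walk a b := by
  refine q.transfer (RG G B) ?_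
  intro e he
  have h1 : ∀ v ∈ e, v ∈ q.support := by
    intro v hv
    induction e with
    | _ c d =>
      rcases Sym2.mem_iff.1 hv with rfl | rfl
      · exact q.fst_mem_support_of_mem_edges he
      · exact q.snd_mem_support_of_mem_edges he
  have h2 := q.edges_subset_edgeSet he
  induction e with
  | _ c d =>
    rw [SimpleGraph.mem_edgeSet] at h2 ⊢
    exact ⟨h2, hsub c (h1 c (Sym2.mem_mk_left _ _)), hsub d (h1 d (Sym2.mem_mk_right _ _))⟩

/-- the set of vertices of a given component, as a finset -/
noncomputable def Ac (G : SimpleGraph V) [DecidableRel G.Adj] (c : G.ConnectedComponent) :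
    Finset V := by
  classical
  exact univ.filter (fun u => G.connectedComponentMk u = c)

lemma mem_Ac {c : G.ConnectedComponent} {u : V} :
    u ∈ Ac G c ↔ G.connectedComponentMk u = c := by
  unfold Ac
  simp

lemma Ac_conn (c : G.ConnectedComponent) :
    ∀ x ∈ Ac G c, ∀ y ∈ Ac G c, (RG G (Ac G c)).Reachable x y := by
  intro x hx y hy
  have hr : G.Reachable x y :=
    SimpleGraph.ConnectedComponent.exact ((mem_Ac.1 hx).trans (mem_Ac.1 hy).symm)
  obtain ⟨q⟩ := hr
  refine ⟨walk_to_RG q ?_⟩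
  intro t ht
  rw [mem_Ac]
  have hrt : G.Reachable x t := reach_of_mem_support q ht
  rw [← mem_Ac.1 hx]
  exact SimpleGraph.ConnectedComponent.sound hrt.symm

lemma incidence_eq (v : V) :
    G.incidenceFinset v
      = (EA G (Ac G (G.connectedComponentMk v))).filter (fun e => v ∈ e) := by
  ext e
  rw [SimpleGraph.mem_incidenceFinset, Finset.mem_filter]
  constructor
  · intro he
    have h1 : e ∈ G.edgeSet := he.1
    have h2 : v ∈ e := he.2
    refine ⟨?_, h2⟩
    induction e with
    | _ a b =>
      rw [SimpleGraph.mem_edgeSet] at h1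
      rw [mem_EA]
      have hab : G.connectedComponentMk a = G.connectedComponentMk b :=
        SimpleGraph.ConnectedComponent.sound h1.reachable
      have hmem : ∀ u, u ∈ s(a, b) → u ∈ Ac G (G.connectedComponentMk v) := by
        intro u hu
        rw [mem_Ac]
        rcases Sym2.mem_iff.1 h2 with rfl | rfl
        · rcases Sym2.mem_iff.1 hu with rfl | rfl
          · rfl
          · exact hab.symm
        · rcases Sym2.mem_iff.1 hu with rfl | rfl
          · exact hab
          · rfl
      exact ⟨a, b, rfl, h1, hmem a (Sym2.mem_mk_left _ _), hmem b (Sym2.mem_mk_right _ _)⟩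
  · rintro ⟨he, hv⟩
    refine ⟨?_, hv⟩
    unfold EA at he
    rw [SimpleGraph.mem_edgeFinset] at he
    induction e with
    | _ a b =>
      rw [SimpleGraph.mem_edgeSet] at he ⊢
      exact he.1

end Pyb

theorem pyber_odd_four_edge_colorable (G : SimpleGraph V) [DecidableRel G.Adj] :
    ∃ f : Sym2 V → Fin 4, IsOddColoring G f := by
  classical
  have hchoice : ∀ c : G.ConnectedComponent,
      ∃ f : Sym2 V → Fin 4, ∀ v i, Pyb.Ok (Pyb.cnt (Pyb.EA G (Pyb.Ac G c)) f v i) :=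
    fun c => Pyb.comp_color (Pyb.Ac G c) (Pyb.Ac_conn c)
  have hpick : ∀ e : Sym2 V, ∃ a, a ∈ e := by
    intro e
    induction e with
    | _ a b => exact ⟨a, Sym2.mem_mk_left _ _⟩
  set pick : Sym2 V → V := fun e => (hpick e).choose with hpickdef
  have hpickmem : ∀ e, pick e ∈ e := fun e => (hpick e).choose_spec
  set F : G.ConnectedComponent → Sym2 V → Fin 4 := fun c => (hchoice c).choose with hFdef
  have hFok : ∀ c v i, Pyb.Ok (Pyb.cnt (Pyb.EA G (Pyb.Ac G c)) (F c) v i) :=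
    fun c => (hchoice c).choose_spec
  refine ⟨fun e => F (G.connectedComponentMk (pick e)) e, ?_⟩
  intro v i
  -- on edges incident to v, the colouring agrees with the one of v's component
  have hagree : ∀ e ∈ G.incidenceFinset v,
      F (G.connectedComponentMk (pick e)) e = F (G.connectedComponentMk v) e := by
    intro e he
    rw [SimpleGraph.mem_incidenceFinset] at he
    have h1 : e ∈ G.edgeSet := he.1
    have h2 : v ∈ e := he.2
    have h3 : pick e ∈ e := hpickmem e
    have hre : G.Reachable (pick e) v := by
      induction e with
      | _ a b =>
        rw [SimpleGraph.mem_edgeSet] at h1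
        rcases Sym2.mem_iff.1 h2 with rfl | rfl
        · rcases Sym2.mem_iff.1 h3 with h4 | h4
          · rw [h4]
          · rw [h4]
            exact h1.symm.reachable
        · rcases Sym2.mem_iff.1 h3 with h4 | h4
          · rw [h4]
            exact h1.reachable
          · rw [h4]
    rw [SimpleGraph.ConnectedComponent.sound hre]
  have hcc : colorCount G (fun e => F (G.connectedComponentMk (pick e)) e) v i
      = Pyb.cnt (Pyb.EA G (Pyb.Ac G (G.connectedComponentMk v)))
          (F (G.connectedComponentMk v)) v i := by
    unfold colorCount Pyb.cnt Pyb.dS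
    have hstep1 : (G.incidenceFinset v).filter
        (fun e => F (G.connectedComponentMk (pick e)) e = i)
        = (G.incidenceFinset v).filter (fun e => F (G.connectedComponentMk v) e = i) := by
      apply Finset.filter_congr
      intro e he
      rw [hagree e he]
    rw [hstep1, Pyb.incidence_eq]
    congr 1
    ext e
    simp only [Finset.mem_filter]
    tauto
  rw [hcc]
  exact hFok (G.connectedComponentMk v) v i
end

section
/- Let G be a connected subdivision of an odd graph, and let C be a cycle of G passing through a vertex of degree 2 in G. If C has even length or C passes through at least two vertices of degree 2 in G, then χ'_o(G) ≤ 3. -/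
open SimpleGraph Finset

set_option linter.unusedSectionVars false
set_option maxHeartbeats 1600000

variable {V : Type*} [Fintype V] [DecidableEq V]

namespace OddColorAux

/-- degree of a vertex w.r.t. an edge finset -/
def degF (S : Finset (Sym2 V)) (u : V) : ℕ := #(S.filter (fun e => u ∈ e))

lemma degF_mono {S T : Finset (Sym2 V)} (h : S ⊆ T) (u : V) : degF S u ≤ degF T u :=
  Finset.card_le_card (Finset.filter_subset_filter _ h)

lemma degF_pos_iff {S : Finset (Sym2 V)} {u : V} : 0 < degF S u ↔ ∃ e ∈ S, u ∈ e := by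
  simp [degF, Finset.card_pos, Finset.filter_nonempty_iff]

/-- symmetric difference -/
def symd (A B : Finset (Sym2 V)) : Finset (Sym2 V) := (A \ B) ∪ (B \ A)

lemma mem_symd {A B : Finset (Sym2 V)} {e : Sym2 V} :
    e ∈ symd A B ↔ (e ∈ A ∧ e ∉ B) ∨ (e ∈ B ∧ e ∉ A) := by
  simp [symd, Finset.mem_union, Finset.mem_sdiff]

lemma symd_subset {A B K : Finset (Sym2 V)} (hA : A ⊆ K) (hB : B ⊆ K) : symd A B ⊆ K := by
  intro e he
  rcases mem_symd.mp he with ⟨h, _⟩ | ⟨h, _⟩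
  exacts [hA h, hB h]

lemma zmod2_cast (n : ℕ) : (n : ZMod 2) = if Even n then 0 else 1 := by
  induction n with
  | zero => simp
  | succ m ih =>
    push_cast
    rw [ih]
    by_cases h : Even m <;> simp [h, Nat.even_add_one] <;> decide

lemma zmod2_eq_zero_iff {n : ℕ} : (n : ZMod 2) = 0 ↔ Even n := by
  rw [zmod2_cast]; by_cases h : Even n <;> simp [h]

lemma zmod2_eq_one_iff {n : ℕ} : (n : ZMod 2) = 1 ↔ Odd n := by
  rw [zmod2_cast, ← Nat.not_even_iff_odd]; by_cases h : Even n <;> simp [h]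

lemma card_symd_nat (A B : Finset (Sym2 V)) :
    (symd A B).card + (A ∩ B).card + (A ∩ B).card = A.card + B.card := by
  have h1 : (symd A B).card = (A \ B).card + (B \ A).card :=
    Finset.card_union_of_disjoint disjoint_sdiff_sdiff
  have h2 := Finset.card_inter_add_card_sdiff A B
  have h3 := Finset.card_inter_add_card_sdiff B A
  rw [Finset.inter_comm B A] at h3
  omega

lemma card_symd_parity (A B : Finset (Sym2 V)) :
    ((symd A B).card : ZMod 2) = A.card + B.card := by
  have h := congrArg (fun n : ℕ => (n : ZMod 2)) (card_symd_nat A B)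
  push_cast at h
  have h2 : ((A ∩ B).card : ZMod 2) + ((A ∩ B).card : ZMod 2) = 0 := by
    rw [← two_mul]
    have : (2 : ZMod 2) = 0 := by decide
    rw [this, zero_mul]
  calc ((symd A B).card : ZMod 2)
      = (symd A B).card + (((A ∩ B).card : ZMod 2) + ((A ∩ B).card : ZMod 2)) := by
        rw [h2, add_zero]
    _ = A.card + B.card := by rw [← add_assoc]; exact h

lemma filter_symd (A B : Finset (Sym2 V)) (p : Sym2 V → Prop) [DecidablePred p] :
    (symd A B).filter p = symd (A.filter p) (B.filter p) := by
  ext e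
  simp only [Finset.mem_filter, mem_symd]
  tauto

lemma degF_symd_parity (A B : Finset (Sym2 V)) (u : V) :
    (degF (symd A B) u : ZMod 2) = degF A u + degF B u := by
  unfold degF
  rw [filter_symd, card_symd_parity]

lemma degF_sdiff_add {T S : Finset (Sym2 V)} (h : T ⊆ S) (u : V) :
    degF (S \ T) u + degF T u = degF S u := by
  unfold degF
  have : (S \ T).filter (fun e => u ∈ e) = S.filter (fun e => u ∈ e) \ T.filter (fun e => u ∈ e) := by
    ext e; simp only [Finset.mem_filter, Finset.mem_sdiff]; tauto
  rw [this, Finset.card_sdiff_add_card_eq_card (Finset.filter_subset_filter _ h)]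

lemma sdiff_eq_symd {S Z : Finset (Sym2 V)} (hZ : Z ⊆ S) : S \ Z = symd S Z := by
  ext e
  simp only [mem_symd, Finset.mem_sdiff]
  constructor
  · intro ⟨h1, h2⟩; exact Or.inl ⟨h1, h2⟩
  · rintro (⟨h1, h2⟩ | ⟨h1, h2⟩)
    · exact ⟨h1, h2⟩
    · exact absurd (hZ h1) h2

lemma degF_insert {S : Finset (Sym2 V)} {e : Sym2 V} (he : e ∉ S) (u : V) :
    degF (insert e S) u = (if u ∈ e then 1 else 0) + degF S u := by
  unfold degF
  rw [Finset.filter_insert]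
  by_cases h : u ∈ e
  · simp only [if_pos h]
    rw [Finset.card_insert_of_notMem (fun hc => he (Finset.mem_filter.mp hc).1)]
    omega
  · simp only [if_neg h]
    omega

lemma degF_trail_edges {H : SimpleGraph V} {a b : V} (p : H.Walk a b) :
    p.IsTrail → ∀ u, (degF p.edges.toFinset u : ZMod 2) =
      (if u = a then 1 else 0) + (if u = b then 1 else 0) := by
  induction p with
  | nil =>
    intro _ u
    have : degF (∅ : Finset (Sym2 V)) u = 0 := by simp [degF]
    simp only [Walk.edges_nil, List.toFinset_nil, this, Nat.cast_zero]
    split_ifs <;> decide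
  | @cons x y z h q ih =>
    intro hp u
    obtain ⟨hq, hne⟩ := (Walk.isTrail_cons h q).mp hp
    have hne' : s(x, y) ∉ q.edges.toFinset := by simpa using hne
    rw [Walk.edges_cons, List.toFinset_cons, degF_insert hne' u, Nat.cast_add]
    have hcast : ((if u ∈ s(x, y) then 1 else 0 : ℕ) : ZMod 2)
        = (if u ∈ s(x, y) then 1 else 0 : ZMod 2) := by
      by_cases hm : u ∈ s(x, y) <;> simp [hm]
    rw [hcast, ih hq u]
    simp only [Sym2.mem_iff]
    have hxy : x ≠ y := h.ne
    by_cases h1 : u = x <;> by_cases h2 : u = y <;> by_cases h3 : u = z <;>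
      simp_all <;> decide

lemma degF_closed_trail_even {H : SimpleGraph V} {a : V} (p : H.Walk a a) (hp : p.IsTrail)
    (u : V) : Even (degF p.edges.toFinset u) := by
  rw [← zmod2_eq_zero_iff, degF_trail_edges p hp u]
  by_cases h : u = a <;> simp [h] <;> decide

lemma walk_edges_mem {K : Finset (Sym2 V)} {a b : V}
    (p : (fromEdgeSet (K : Set (Sym2 V))).Walk a b) : ∀ e ∈ p.edges, e ∈ K := by
  intro e he
  have h2 := p.edges_subset_edgeSet he
  rw [edgeSet_fromEdgeSet] at h2
  exact h2.1

lemma walk_edges_toFinset_subset {K : Finset (Sym2 V)} {a b : V}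
    (p : (fromEdgeSet (K : Set (Sym2 V))).Walk a b) : p.edges.toFinset ⊆ K := by
  intro e he
  exact walk_edges_mem p e (List.mem_toFinset.mp he)

lemma zmod2_all : ∀ a : ZMod 2, a = 0 ∨ a = 1 := by decide

lemma zmod2_cases (a : ZMod 2) : a = 0 ∨ a = 1 := zmod2_all a

lemma exists_parity_join (K : Finset (Sym2 V)) :
    ∀ (n : ℕ) (s : V → ZMod 2), #(univ.filter (fun u => s u ≠ 0)) = n →
    (∀ u w, s u ≠ 0 → s w ≠ 0 → (fromEdgeSet (K : Set (Sym2 V))).Reachable u w) →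
    (∑ u, s u) = 0 →
    ∃ A ⊆ K, ∀ u, (degF A u : ZMod 2) = s u := by
  intro n
  induction n using Nat.strong_induction_on with
  | _ n IH =>
    intro s hcard hconn hsum
    rcases Nat.eq_zero_or_pos n with hn | hn
    · refine ⟨∅, Finset.empty_subset _, fun u => ?_⟩
      have hs0 : s u = 0 := by
        by_contra hne
        have hmem : u ∈ univ.filter (fun u => s u ≠ 0) := by simp [hne]
        rw [hn] at hcard
        rw [Finset.card_eq_zero.mp hcard] at hmem
        exact absurd hmem (Finset.notMem_empty u)
      simp [degF, hs0]
    · have hne : (univ.filter (fun u => s u ≠ 0)).Nonempty := by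
        rw [← Finset.card_pos, hcard]; exact hn
      obtain ⟨u₁, hu₁⟩ := hne
      have hsu₁ : s u₁ ≠ 0 := by simpa using (Finset.mem_filter.mp hu₁).2
      have hex : ∃ u₂, u₂ ≠ u₁ ∧ s u₂ ≠ 0 := by
        by_contra hno
        push_neg at hno
        have hsingle : ∑ u, s u = s u₁ :=
          Finset.sum_eq_single u₁ (fun b _ hb => hno b hb)
            (fun habs => absurd (Finset.mem_univ u₁) habs)
        rw [hsum] at hsingle
        exact hsu₁ hsingle.symm
      obtain ⟨u₂, hne21, hsu₂⟩ := hex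
      obtain ⟨w⟩ := hconn u₁ u₂ hsu₁ hsu₂
      set p := w.toPath with hp_def
      have hp : (p : (fromEdgeSet (K : Set (Sym2 V))).Walk u₁ u₂).IsPath := p.2
      set s' : V → ZMod 2 := fun u => if u = u₁ then 0 else if u = u₂ then 0 else s u
        with hs'def
      have hs'u : ∀ u, u ≠ u₁ → u ≠ u₂ → s' u = s u := by
        intro u h1 h2; simp [hs'def, h1, h2]
      have hs'cases : ∀ u, s' u ≠ 0 → s u ≠ 0 ∧ u ≠ u₁ ∧ u ≠ u₂ := by
        intro u hu
        by_cases h1 : u = u₁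
        · subst h1; simp [hs'def] at hu
        · by_cases h2 : u = u₂
          · subst h2; simp [hs'def, h1] at hu
          · rw [hs'u u h1 h2] at hu; exact ⟨hu, h1, h2⟩
      have hfil : univ.filter (fun u => s' u ≠ 0)
          = (univ.filter (fun u => s u ≠ 0)) \ {u₁, u₂} := by
        ext u
        simp only [Finset.mem_filter, Finset.mem_sdiff, Finset.mem_univ, true_and,
          Finset.mem_insert, Finset.mem_singleton]
        constructor
        · intro hu
          obtain ⟨ha, hb, hc⟩ := hs'cases u hu
          exact ⟨ha, fun hor => by rcases hor with h | h; exacts [hb h, hc h]⟩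
        · intro ⟨ha, hb⟩
          push_neg at hb
          rw [hs'u u hb.1 hb.2]
          exact ha
      have hsub2 : ({u₁, u₂} : Finset V) ⊆ univ.filter (fun u => s u ≠ 0) := by
        intro u hu
        rcases Finset.mem_insert.mp hu with rfl | hu
        · simpa using hsu₁
        · rw [Finset.mem_singleton.mp hu]; simpa using hsu₂
      have hcard2 : ({u₁, u₂} : Finset V).card = 2 := by
        rw [Finset.card_insert_of_notMem (by simpa using hne21.symm), Finset.card_singleton]
      have hnge : 2 ≤ n := by
        have h := Finset.card_le_card hsub2
        rw [hcard2, hcard] at h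
        exact h
      have hcard' : #(univ.filter (fun u => s' u ≠ 0)) = n - 2 := by
        rw [hfil, Finset.card_sdiff_of_subset hsub2, hcard, hcard2]
      have hs1 : s u₁ = 1 := (zmod2_cases (s u₁)).resolve_left hsu₁
      have hs2 : s u₂ = 1 := (zmod2_cases (s u₂)).resolve_left hsu₂
      have hptw : ∀ u, s u = s' u + (if u = u₁ then 1 else 0) + (if u = u₂ then 1 else 0) := by
        intro u
        by_cases h1 : u = u₁
        · have hx : u₁ ≠ u₂ := fun hh => hne21 hh.symm
          rw [h1, hs1]
          simp [hs'def, hx]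
        · by_cases h2 : u = u₂
          · rw [h2, hs2]
            simp [hs'def, hne21]
          · rw [hs'u u h1 h2]
            simp [h1, h2]
      have hsum' : ∑ u, s' u = 0 := by
        have : ∑ u, s u = (∑ u, s' u) + (∑ u : V, if u = u₁ then (1 : ZMod 2) else 0)
            + (∑ u : V, if u = u₂ then (1 : ZMod 2) else 0) := by
          rw [← Finset.sum_add_distrib, ← Finset.sum_add_distrib]
          exact Finset.sum_congr rfl (fun u _ => hptw u)
        rw [hsum, Finset.sum_ite_eq' univ u₁ (fun _ => (1 : ZMod 2)),
          Finset.sum_ite_eq' univ u₂ (fun _ => (1 : ZMod 2))] at this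
        simp only [Finset.mem_univ, if_true] at this
        have h11 : (1 : ZMod 2) + 1 = 0 := by decide
        calc ∑ u, s' u = ∑ u, s' u + (1 + 1) := by rw [h11, add_zero]
          _ = ∑ u, s' u + 1 + 1 := by ring
          _ = 0 := this.symm
      have hconn' : ∀ u w', s' u ≠ 0 → s' w' ≠ 0 →
          (fromEdgeSet (K : Set (Sym2 V))).Reachable u w' := fun u w' hu hw =>
        hconn u w' (hs'cases u hu).1 (hs'cases w' hw).1
      obtain ⟨A', hA'sub, hA'⟩ := IH (n - 2) (by omega) s' hcard' hconn' hsum'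
      refine ⟨symd A' (p : (fromEdgeSet (K : Set (Sym2 V))).Walk u₁ u₂).edges.toFinset,
        symd_subset hA'sub (walk_edges_toFinset_subset _), fun u => ?_⟩
      rw [degF_symd_parity, hA' u,
        degF_trail_edges (p : (fromEdgeSet (K : Set (Sym2 V))).Walk u₁ u₂) hp.isTrail u]
      rw [hptw u]
      ring

lemma even_subset_path {H : SimpleGraph V} {a b : V} (p : H.Walk a b) :
    p.IsPath → ∀ Z ⊆ p.edges.toFinset, (∀ u, Even (degF Z u)) → Z = ∅ := by
  induction p with
  | nil =>
    intro _ Z hZ _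
    simpa using Finset.subset_empty.mp (by simpa using hZ)
  | @cons x y z h q ih =>
    intro hp Z hZ hev
    obtain ⟨hq, hxs⟩ := (Walk.cons_isPath_iff h q).mp hp
    have hxq : ∀ e ∈ q.edges, x ∉ e := by
      intro e he hx
      rw [← Sym2.other_spec hx] at he
      exact hxs (q.fst_mem_support_of_mem_edges he)
    have hfil : Z.filter (fun e => x ∈ e) ⊆ {s(x, y)} := by
      intro e he
      obtain ⟨heZ, hex⟩ := Finset.mem_filter.mp he
      have := hZ heZ
      rw [Walk.edges_cons, List.toFinset_cons, Finset.mem_insert] at this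
      rcases this with h1 | h1
      · simpa using h1
      · exact absurd hex (hxq e (List.mem_toFinset.mp h1))
    have hdeg : degF Z x = 0 := by
      have h1 : degF Z x ≤ 1 := by
        have := Finset.card_le_card hfil
        simpa [degF] using this
      obtain ⟨k, hk⟩ := hev x
      omega
    have hhead : s(x, y) ∉ Z := by
      intro hc
      have : s(x, y) ∈ Z.filter (fun e => x ∈ e) :=
        Finset.mem_filter.mpr ⟨hc, Sym2.mem_mk_left x y⟩
      have : 0 < degF Z x := Finset.card_pos.mpr ⟨_, this⟩
      omega
    have hZq : Z ⊆ q.edges.toFinset := by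
      intro e he
      have := hZ he
      rw [Walk.edges_cons, List.toFinset_cons, Finset.mem_insert] at this
      rcases this with h1 | h1
      · exact absurd (h1 ▸ he) hhead
      · exact h1
    exact ih hq Z hZq hev

lemma even_subset_cycle {H : SimpleGraph V} {a : V} (p : H.Walk a a) (hp : p.IsCycle)
    (Z : Finset (Sym2 V)) (hZ : Z ⊆ p.edges.toFinset) (hev : ∀ u, Even (degF Z u)) :
    Z = ∅ ∨ Z = p.edges.toFinset := by
  cases p with
  | nil => exact absurd rfl hp.isCircuit.ne_nil
  | @cons _ y _ h q =>
    obtain ⟨hq, hna⟩ := (Walk.cons_isCycle_iff q h).mp hp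
    by_cases hhead : s(a, y) ∈ Z
    · right
      set Zc := (Walk.cons h q).edges.toFinset \ Z with hZc
      have hallEven : ∀ u, Even (degF (Walk.cons h q).edges.toFinset u) :=
        degF_closed_trail_even _ hp.isCircuit.isTrail
      have hevc : ∀ u, Even (degF Zc u) := by
        intro u
        have h1 : degF Zc u + degF Z u = degF ((Walk.cons h q).edges.toFinset) u := by
          rw [hZc]; exact degF_sdiff_add hZ u
        obtain ⟨k1, hk1⟩ := hallEven u
        obtain ⟨k2, hk2⟩ := hev u
        rw [Nat.even_iff]
        omega
      have hheadc : s(a, y) ∉ Zc := by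
        simp only [hZc, Finset.mem_sdiff]
        intro hc
        exact hc.2 hhead
      have hqZ : Zc ⊆ q.edges.toFinset := by
        intro e he
        have h1 := (Finset.mem_sdiff.mp he).1
        rw [Walk.edges_cons, List.toFinset_cons, Finset.mem_insert] at h1
        rcases h1 with h1 | h1
        · exact absurd (h1 ▸ he) hheadc
        · exact h1
      have := even_subset_path q hq Zc hqZ hevc
      have h2 : (Walk.cons h q).edges.toFinset ⊆ Z := by
        rwa [← Finset.sdiff_eq_empty_iff_subset, ← hZc]
      exact Finset.Subset.antisymm hZ h2
    · left
      have hZq : Z ⊆ q.edges.toFinset := by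
        intro e he
        have := hZ he
        rw [Walk.edges_cons, List.toFinset_cons, Finset.mem_insert] at this
        rcases this with h1 | h1
        · exact absurd (h1 ▸ he) hhead
        · exact h1
      exact even_subset_path q hq Z hZq hev

lemma path_end_degF_le_one {H : SimpleGraph V} {a b : V} (p : H.Walk a b) :
    p.IsPath → degF p.edges.toFinset b ≤ 1 := by
  induction p with
  | nil => intro _; simp [degF]
  | @cons x y z h q ih =>
    intro hp
    obtain ⟨hq, hxs⟩ := (Walk.cons_isPath_iff h q).mp hp
    have hne' : s(x, y) ∉ q.edges.toFinset := by
      simp only [List.mem_toFinset]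
      intro hc
      exact hxs (q.fst_mem_support_of_mem_edges hc)
    rw [Walk.edges_cons, List.toFinset_cons, degF_insert hne' z]
    by_cases hzy : z = y
    · subst hzy
      cases q with
      | nil => simp [degF]
      | cons h' q' =>
        obtain ⟨_, hzs⟩ := (Walk.cons_isPath_iff h' q').mp hq
        exact absurd (Walk.end_mem_support q') hzs
    · have hzx : z ≠ x := fun hh => hxs (hh ▸ Walk.end_mem_support q)
      have hnm : z ∉ s(x, y) := by
        rw [Sym2.mem_iff]
        push_neg
        exact ⟨hzx, hzy⟩
      rw [if_neg hnm]
      have := ih hq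
      omega

lemma path_ne_of_pos_length {H : SimpleGraph V} {a b : V} (p : H.Walk a b)
    (hp : p.IsPath) (hl : 1 ≤ p.length) : a ≠ b := by
  intro hab
  subst hab
  cases p with
  | nil => simp at hl
  | cons h q =>
    obtain ⟨hq, hxs⟩ := (Walk.cons_isPath_iff _ _).mp hp
    exact hxs (Walk.end_mem_support q)

lemma exists_first_edge {H : SimpleGraph V} {a b : V} (p : H.Walk a b) (hl : 1 ≤ p.length) :
    ∃ c, H.Adj a c ∧ s(a, c) ∈ p.edges := by
  cases p with
  | nil => simp at hl
  | cons h q => exact ⟨_, h, by simp⟩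

lemma maxpath (K : Finset (Sym2 V)) (hne : K.Nonempty) (hdiag : ∀ e ∈ K, ¬ e.IsDiag) :
    (∃ (c : V) (W : (fromEdgeSet (K : Set (Sym2 V))).Walk c c), W.IsCycle) ∨
    (∃ (x y : V) (p : (fromEdgeSet (K : Set (Sym2 V))).Walk x y),
      p.IsPath ∧ 1 ≤ p.length ∧ degF K x = 1 ∧ degF K y = 1) := by
  classical
  set H := fromEdgeSet (K : Set (Sym2 V)) with hH
  obtain ⟨e₀, he₀⟩ := hne
  revert he₀
  refine Sym2.ind (fun a₀ b₀ => ?_) e₀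
  intro he₀
  have hadj₀ : H.Adj a₀ b₀ := by
    rw [hH, fromEdgeSet_adj]
    exact ⟨Finset.mem_coe.mpr he₀,
      fun hh => hdiag _ he₀ (Sym2.mk_isDiag_iff.mpr hh)⟩
  set P : ℕ → Prop := fun n => ∃ (x y : V) (p : H.Walk x y), p.IsPath ∧ p.length = n
    with hPdef
  haveI : DecidablePred P := Classical.decPred P
  have hP1 : P 1 := by
    refine ⟨a₀, b₀, Walk.cons hadj₀ Walk.nil, ?_, by simp⟩
    rw [Walk.cons_isPath_iff]
    exact ⟨Walk.IsPath.nil, by simpa using hadj₀.ne⟩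
  have hbound : ∀ n, P n → n < Fintype.card V := by
    rintro n ⟨x, y, p, hp, hl⟩
    exact hl ▸ hp.length_lt
  set N := Nat.findGreatest P (Fintype.card V) with hNdef
  have hPN : P N := Nat.findGreatest_spec (le_of_lt (hbound 1 hP1)) hP1
  have hN1 : 1 ≤ N := Nat.le_findGreatest (le_of_lt (hbound 1 hP1)) hP1
  have hmax : ∀ m, N < m → ¬ P m := fun m hm hPm =>
    Nat.findGreatest_is_greatest hm (le_of_lt (hbound m hPm)) hPm
  have key : ∀ (x y : V) (p : H.Walk x y), p.IsPath → p.length = N → degF K y ≠ 1 →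
      ∃ (c : V) (W : H.Walk c c), W.IsCycle := by
    intro x y p hp hlen hdy
    obtain ⟨z₀, hadjy, hlast⟩ := exists_first_edge p.reverse
      (by rw [Walk.length_reverse, hlen]; exact hN1)
    rw [Walk.edges_reverse, List.mem_reverse] at hlast
    have hlastK : s(y, z₀) ∈ K := by
      have h2 := p.edges_subset_edgeSet hlast
      rw [edgeSet_fromEdgeSet] at h2
      exact Finset.mem_coe.mp h2.1
    have hge1 : 0 < degF K y := degF_pos_iff.mpr ⟨_, hlastK, Sym2.mem_mk_left y z₀⟩
    have hge2 : 2 ≤ degF K y := by omega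
    obtain ⟨f, hfK, hfy, hfne⟩ : ∃ f, f ∈ K ∧ y ∈ f ∧ f ≠ s(y, z₀) := by
      by_contra hno
      push_neg at hno
      have hsub : K.filter (fun e => y ∈ e) ⊆ {s(y, z₀)} := by
        intro e he
        obtain ⟨h1, h2⟩ := Finset.mem_filter.mp he
        rw [Finset.mem_singleton]
        exact hno e h1 h2
      have := Finset.card_le_card hsub
      simp only [Finset.card_singleton] at this
      unfold degF at hge2
      omega
    have hfz : s(y, Sym2.Mem.other hfy) = f := Sym2.other_spec hfy
    set z := Sym2.Mem.other hfy with hzdef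
    have hzy : z ≠ y := by
      intro hzz
      apply hdiag f hfK
      rw [← hfz, hzz]
      exact Sym2.mk_isDiag_iff.mpr rfl
    have hadj : H.Adj y z := by
      rw [hH, fromEdgeSet_adj]
      refine ⟨?_, fun hh => hzy hh.symm⟩
      rw [hfz]
      exact Finset.mem_coe.mpr hfK
    by_cases hzsup : z ∈ p.support
    · set r := p.dropUntil z hzsup with hrdef
      have hrp : r.IsPath := hp.dropUntil hzsup
      have hnotin : ¬ s(y, z) ∈ r.edges := by
        intro hin
        have hinp : s(y, z) ∈ p.edges := Walk.edges_dropUntil_subset p hzsup hin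
        have hcard2 : 1 < degF p.edges.toFinset y := by
          apply Finset.one_lt_card.mpr
          refine ⟨s(y, z), ?_, s(y, z₀), ?_, ?_⟩
          · exact Finset.mem_filter.mpr ⟨List.mem_toFinset.mpr hinp, Sym2.mem_mk_left _ _⟩
          · exact Finset.mem_filter.mpr ⟨List.mem_toFinset.mpr hlast, Sym2.mem_mk_left _ _⟩
          · rw [hfz]; exact hfne
        have := path_end_degF_le_one p hp
        omega
      exact ⟨y, Walk.cons hadj r, (Walk.cons_isCycle_iff r hadj).mpr ⟨hrp, hnotin⟩⟩
    · have hp' : (Walk.cons hadj.symm p.reverse).IsPath := by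
        rw [Walk.cons_isPath_iff]
        exact ⟨hp.reverse, by rwa [Walk.support_reverse, List.mem_reverse]⟩
      have hPN1 : P (N + 1) :=
        ⟨z, x, Walk.cons hadj.symm p.reverse, hp', by simp [Walk.length_reverse, hlen]⟩
      exact absurd hPN1 (hmax _ (Nat.lt_succ_self N))
  obtain ⟨x, y, p, hp, hlen⟩ := hPN
  by_cases hdy : degF K y = 1
  · by_cases hdx : degF K x = 1
    · exact Or.inr ⟨x, y, p, hp, hlen ▸ hN1, hdx, hdy⟩
    · exact Or.inl (key y x p.reverse hp.reverse
        (by rw [Walk.length_reverse]; exact hlen) hdx)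
  · exact Or.inl (key x y p hp hlen hdy)

lemma cycle_edges_toFinset_nonempty {H : SimpleGraph V} {c : V} (W : H.Walk c c)
    (hW : W.IsCycle) : W.edges.toFinset.Nonempty := by
  have h3 := hW.three_le_length
  have hne : W.edges ≠ [] := by
    intro hnil
    have hl := W.length_edges
    rw [hnil] at hl
    simp only [List.length_nil] at hl
    omega
  exact ⟨W.edges.head hne, List.mem_toFinset.mpr (List.head_mem _)⟩

lemma build_A (EC : Finset (Sym2 V))
    (hECconn : ∀ u w, 0 < degF EC u → 0 < degF EC w →
      (fromEdgeSet (EC : Set (Sym2 V))).Reachable u w) :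
    ∀ (n : ℕ) (J : Finset (Sym2 V)), J.card = n → (∀ e ∈ J, ¬ e.IsDiag) →
    (∀ Z, Z ⊆ J → Z.Nonempty → (∀ u, Even (degF Z u)) → Z = EC ∧ EC ⊆ J) →
    (EC ⊆ J → Even #(univ.filter (fun u => 0 < degF EC u))) →
    ∃ A ⊆ J, ∀ u, Even (degF J u) → 0 < degF J u → Odd (degF A u) := by
  intro n
  induction n using Nat.strong_induction_on with
  | _ n IH =>
    intro J hJcard hdiag hev hodd
    by_cases hJe : J = ∅
    · refine ⟨∅, Finset.empty_subset _, fun u _ hPos => ?_⟩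
      rw [hJe] at hPos
      simp [degF] at hPos
    by_cases hleaf : ∃ u, degF J u = 1
    · obtain ⟨u, hu⟩ := hleaf
      obtain ⟨e, he⟩ := Finset.card_eq_one.mp hu
      have heJ : e ∈ J := by
        have h1 : e ∈ J.filter (fun e => u ∈ e) := he ▸ Finset.mem_singleton_self e
        exact (Finset.mem_filter.mp h1).1
      have heu : u ∈ e := by
        have h1 : e ∈ J.filter (fun e => u ∈ e) := he ▸ Finset.mem_singleton_self e
        exact (Finset.mem_filter.mp h1).2
      have hfz : s(u, Sym2.Mem.other heu) = e := Sym2.other_spec heu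
      set y := Sym2.Mem.other heu with hydef
      have hyu : y ≠ u := by
        intro hh
        apply hdiag e heJ
        rw [← hfz, hh]
        exact Sym2.mk_isDiag_iff.mpr rfl
      set J' := J.erase e with hJ'def
      have hcard' : J'.card < n := by
        rw [← hJcard, hJ'def]
        exact Finset.card_lt_card (Finset.erase_ssubset heJ)
      have hdiag' : ∀ e' ∈ J', ¬ e'.IsDiag := fun e' he' =>
        hdiag e' (Finset.erase_subset _ _ he')
      have hev' : ∀ Z, Z ⊆ J' → Z.Nonempty → (∀ u, Even (degF Z u)) → Z = EC ∧ EC ⊆ J' := by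
        intro Z hZ hZne hZev
        obtain ⟨h1, _⟩ := hev Z (hZ.trans (Finset.erase_subset _ _)) hZne hZev
        exact ⟨h1, h1 ▸ hZ⟩
      have hodd' : EC ⊆ J' → Even #(univ.filter (fun u => 0 < degF EC u)) :=
        fun hsub => hodd (hsub.trans (Finset.erase_subset _ _))
      obtain ⟨A', hA'sub, hA'⟩ := IH J'.card hcard' J' rfl hdiag' hev' hodd'
      have hdegy' : ∀ w, w ≠ u → w ≠ y → degF J' w = degF J w := by
        intro w hwu hwy
        unfold degF
        congr 1
        rw [hJ'def]
        ext e'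
        simp only [Finset.mem_filter, Finset.mem_erase]
        constructor
        · rintro ⟨⟨_, h2⟩, h3⟩
          exact ⟨h2, h3⟩
        · rintro ⟨h2, h3⟩
          refine ⟨⟨?_, h2⟩, h3⟩
          intro hee
          subst hee
          rw [← hfz, Sym2.mem_iff] at h3
          rcases h3 with h3 | h3
          exacts [hwu h3, hwy h3]
      have hy_e : y ∈ e := by
        rw [← hfz]
        exact Sym2.mem_mk_right u y
      have hmemy : e ∈ J.filter (fun e' => y ∈ e') := Finset.mem_filter.mpr ⟨heJ, hy_e⟩
      have hdegyJ : degF J' y = degF J y - 1 := by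
        unfold degF
        rw [hJ'def]
        have h5 : (J.erase e).filter (fun e' => y ∈ e')
            = (J.filter (fun e' => y ∈ e')).erase e := by
          ext e'
          simp only [Finset.mem_filter, Finset.mem_erase]
          tauto
        rw [h5, Finset.card_erase_of_mem hmemy]
      have hdegy1 : 1 ≤ degF J y := Finset.card_pos.mpr ⟨e, hmemy⟩
      by_cases hcase : Even (degF J y) ∧ 0 < degF J y ∧ Even (degF A' y)
      · have heA' : e ∉ A' := fun hc => (Finset.mem_erase.mp (hA'sub hc)).1 rfl
        refine ⟨insert e A', ?_, ?_⟩
        · intro e' he'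
          rcases Finset.mem_insert.mp he' with rfl | he'
          · exact heJ
          · exact Finset.erase_subset _ _ (hA'sub he')
        · intro w hwEv hwPos
          by_cases hwu : w = u
          · rw [hwu, hu] at hwEv
            exact absurd hwEv (by decide)
          · by_cases hwy : w = y
            · rw [hwy, degF_insert heA' y, if_pos hy_e]
              obtain ⟨k, hk⟩ := hcase.2.2
              rw [Nat.odd_iff]
              omega
            · rw [degF_insert heA' w, if_neg (by
                rw [← hfz, Sym2.mem_iff]
                push_neg
                exact ⟨hwu, hwy⟩)]
              have hEv' : Even (degF J' w) := by rw [hdegy' w hwu hwy]; exact hwEv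
              have hPos' : 0 < degF J' w := by rw [hdegy' w hwu hwy]; exact hwPos
              simpa using hA' w hEv' hPos'
      · refine ⟨A', hA'sub.trans (Finset.erase_subset _ _), ?_⟩
        intro w hwEv hwPos
        by_cases hwu : w = u
        · rw [hwu, hu] at hwEv
          exact absurd hwEv (by decide)
        · by_cases hwy : w = y
          · have hne2 : ¬ Even (degF A' y) := fun hc => hcase ⟨hwy ▸ hwEv, hwy ▸ hwPos, hc⟩
            rw [hwy]
            exact Nat.not_even_iff_odd.mp hne2
          · have hEv' : Even (degF J' w) := by rw [hdegy' w hwu hwy]; exact hwEv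
            have hPos' : 0 < degF J' w := by rw [hdegy' w hwu hwy]; exact hwPos
            exact hA' w hEv' hPos'
    -- no leaf
    push_neg at hleaf
    have hJne : J.Nonempty := Finset.nonempty_of_ne_empty hJe
    rcases maxpath J hJne hdiag with ⟨c, W, hW⟩ | ⟨x, y, p, hp, hlen, hdx, _⟩
    swap
    · exact absurd hdx (hleaf x)
    have hWev : ∀ u, Even (degF W.edges.toFinset u) :=
      degF_closed_trail_even W hW.isCircuit.isTrail
    have hWsub : W.edges.toFinset ⊆ J := walk_edges_toFinset_subset W
    obtain ⟨hWEC, hECJ⟩ := hev _ hWsub (cycle_edges_toFinset_nonempty W hW) hWev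
    by_cases hFe : J \ EC = ∅
    · have hJEC : J = EC :=
        Finset.Subset.antisymm (Finset.sdiff_eq_empty_iff_subset.mp hFe) hECJ
      set s : V → ZMod 2 := fun u => if 0 < degF EC u then 1 else 0 with hsdef
      have hsum : ∑ u, s u = 0 := by
        have hb : ∑ u, s u = ((#(univ.filter (fun u => 0 < degF EC u)) : ℕ) : ZMod 2) := by
          rw [hsdef]
          exact Finset.sum_boole _ _
        rw [hb]
        exact zmod2_eq_zero_iff.mpr (hodd hECJ)
      have hconn : ∀ u w, s u ≠ 0 → s w ≠ 0 →
          (fromEdgeSet (EC : Set (Sym2 V))).Reachable u w := by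
        intro u w hsu hsw
        apply hECconn
        · by_contra hpos
          rw [hsdef] at hsu
          simp only [if_neg hpos] at hsu
          exact hsu rfl
        · by_contra hpos
          rw [hsdef] at hsw
          simp only [if_neg hpos] at hsw
          exact hsw rfl
      obtain ⟨A, hAsub, hA⟩ := exists_parity_join EC _ s rfl hconn hsum
      refine ⟨A, by rw [hJEC]; exact hAsub, ?_⟩
      intro w _ hwPos
      rw [hJEC] at hwPos
      have hsw : s w = 1 := by rw [hsdef]; simp [hwPos]
      exact zmod2_eq_one_iff.mp (by rw [hA w, hsw])
    · have hFsub : (J \ EC) ⊆ J := Finset.sdiff_subset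
      have hdiagF : ∀ e ∈ J \ EC, ¬ e.IsDiag := fun e he => hdiag e (hFsub he)
      have hFne : (J \ EC).Nonempty := Finset.nonempty_of_ne_empty hFe
      rcases maxpath (J \ EC) hFne hdiagF with ⟨c₂, W₂, hW₂⟩ | ⟨x₂, y₂, p₂, hp₂, hl₂, _, _⟩
      · have hsub₂ : W₂.edges.toFinset ⊆ J \ EC := walk_edges_toFinset_subset W₂
        have hne₂ := cycle_edges_toFinset_nonempty W₂ hW₂
        obtain ⟨hZ2, _⟩ := hev _ (hsub₂.trans hFsub) hne₂
          (degF_closed_trail_even W₂ hW₂.isCircuit.isTrail)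
        obtain ⟨e₂, he₂⟩ := hne₂
        have h1 : e₂ ∈ EC := hZ2 ▸ he₂
        have h2 : e₂ ∉ EC := (Finset.mem_sdiff.mp (hsub₂ he₂)).2
        exact absurd h1 h2
      · have hsplit : ∀ u, degF (J \ EC) u + degF EC u = degF J u := fun u =>
          degF_sdiff_add hECJ u
        have hx₂EC : 0 < degF EC x₂ := by
          have h6 := hleaf x₂
          have h7 := hsplit x₂
          omega
        have hy₂EC : 0 < degF EC y₂ := by
          have h6 := hleaf y₂
          have h7 := hsplit y₂
          omega
        obtain ⟨w₃⟩ := hECconn x₂ y₂ hx₂EC hy₂EC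
        set q₃ := (w₃.toPath).1 with hq₃def
        have hp₃ : q₃.IsPath := (w₃.toPath).2
        set Zs := symd p₂.edges.toFinset q₃.edges.toFinset with hZsdef
        have hZsJ : Zs ⊆ J := symd_subset
          ((walk_edges_toFinset_subset p₂).trans hFsub)
          ((walk_edges_toFinset_subset q₃).trans hECJ)
        have haux : ∀ a b : ZMod 2, (a + b) + (a + b) = 0 := by decide
        have hZsev : ∀ u, Even (degF Zs u) := by
          intro u
          rw [← zmod2_eq_zero_iff, hZsdef, degF_symd_parity,
            degF_trail_edges p₂ hp₂.isTrail u, degF_trail_edges q₃ hp₃.isTrail u]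
          exact haux _ _
        obtain ⟨c₃, _, hfirst⟩ := exists_first_edge p₂ hl₂
        have hfirstF : s(x₂, c₃) ∈ J \ EC :=
          (walk_edges_toFinset_subset p₂) (List.mem_toFinset.mpr hfirst)
        have hfirstZs : s(x₂, c₃) ∈ Zs := by
          rw [hZsdef, mem_symd]
          left
          refine ⟨List.mem_toFinset.mpr hfirst, fun hc => ?_⟩
          exact (Finset.mem_sdiff.mp hfirstF).2 ((walk_edges_toFinset_subset q₃) hc)
        obtain ⟨hZsEC, _⟩ := hev Zs hZsJ ⟨_, hfirstZs⟩ hZsev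
        rw [hZsEC] at hfirstZs
        exact absurd hfirstZs (Finset.mem_sdiff.mp hfirstF).2

section CycleFacts

variable {G : SimpleGraph V} {x : V} {C : G.Walk x x}

lemma mem_support_of_degF_pos {u : V}
    (h : 0 < degF C.edges.toFinset u) : u ∈ C.support := by
  obtain ⟨e, he, hue⟩ := degF_pos_iff.mp h
  rw [List.mem_toFinset] at he
  rw [← Sym2.other_spec hue] at he
  exact C.fst_mem_support_of_mem_edges he

lemma degF_pos_of_mem_support (hC : C.IsCycle) {u : V} (hu : u ∈ C.support) :
    0 < degF C.edges.toFinset u := by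
  rw [degF_pos_iff]
  have hrot := C.rotate_edges u hu
  have hlen : (C.rotate u hu).length = C.length := by
    have h1 := (C.rotate u hu).length_edges
    have h2 := C.length_edges
    have h3 := hrot.perm.length_eq
    omega
  obtain ⟨c, _, hfe⟩ := exists_first_edge (C.rotate u hu)
    (by rw [hlen]; have := hC.three_le_length; omega)
  refine ⟨s(u, c), List.mem_toFinset.mpr (hrot.mem_iff.mp hfe), Sym2.mem_mk_left _ _⟩

lemma end_mem_support_tail (hC : C.IsCycle) : x ∈ C.support.tail := by
  revert hC
  cases C with
  | nil => intro hC; exact absurd rfl hC.isCircuit.ne_nil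
  | cons h q =>
    intro _
    rw [Walk.support_cons]
    simpa using Walk.end_mem_support q

lemma cycle_support_card (hC : C.IsCycle) : C.support.toFinset.card = C.length := by
  have hsup := C.support_eq_cons
  have hlensup := C.length_support
  have h3 := hC.three_le_length
  have htail_len : C.support.tail.length = C.length := by
    rw [hsup] at hlensup
    simpa using hlensup
  have htail_ne : C.support.tail ≠ [] := by
    intro hnil
    rw [hnil] at htail_len
    simp at htail_len
    omega
  have hxtail : x ∈ C.support.tail := end_mem_support_tail hC
  conv_lhs => rw [hsup]
  rw [List.toFinset_cons, Finset.insert_eq_self.mpr (List.mem_toFinset.mpr hxtail),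
    List.toFinset_card_of_nodup hC.support_nodup, htail_len]

lemma filter_degF_pos_eq (hC : C.IsCycle) : univ.filter (fun u => 0 < degF C.edges.toFinset u)
    = C.support.toFinset := by
  ext u
  simp only [Finset.mem_filter, Finset.mem_univ, true_and, List.mem_toFinset]
  exact ⟨mem_support_of_degF_pos, degF_pos_of_mem_support hC⟩

lemma reach_in_EC : ∀ u w, 0 < degF C.edges.toFinset u → 0 < degF C.edges.toFinset w →
    (fromEdgeSet ((C.edges.toFinset : Finset (Sym2 V)) : Set (Sym2 V))).Reachable u w := by
  intro u w hu hw
  have hu' := mem_support_of_degF_pos hu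
  have hw' := mem_support_of_degF_pos hw
  have hsub : ∀ e ∈ C.edges,
      e ∈ (fromEdgeSet ((C.edges.toFinset : Finset (Sym2 V)) : Set (Sym2 V))).edgeSet := by
    intro e he
    rw [edgeSet_fromEdgeSet]
    exact ⟨List.mem_toFinset.mpr he,
      fun hd => G.not_isDiag_of_mem_edgeSet (C.edges_subset_edgeSet he) hd⟩
  have hsupp : u ∈ (C.transfer _ hsub).support := by
    rw [Walk.support_transfer]; exact hu'
  have hsupp' : w ∈ (C.transfer _ hsub).support := by
    rw [Walk.support_transfer]; exact hw'
  exact ((((C.transfer _ hsub).takeUntil u hsupp).reverse).append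
    ((C.transfer _ hsub).takeUntil w hsupp')).reachable

end CycleFacts

lemma coloring_of_JA (G : SimpleGraph V) [DecidableRel G.Adj]
    (hsub : ∀ u : V, Odd (G.degree u) ∨ G.degree u = 2)
    (J A : Finset (Sym2 V)) (hJE : J ⊆ G.edgeFinset) (hAJ : A ⊆ J)
    (hdemand : ∀ u, Even (degF J u) → 0 < degF J u → Odd (degF A u))
    (hodddeg : ∀ u, Odd (G.degree u) → Even (degF J u))
    (hdeg2 : ∀ u, G.degree u = 2 → degF J u = 1 ∨ degF J u = 2) :
    ∃ f : Sym2 V → Fin 3, IsOddColoring G f := by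
  classical
  set f : Sym2 V → Fin 3 := fun e => if e ∈ A then 0 else if e ∈ J then 1 else 2 with hfdef
  have hAE : A ⊆ G.edgeFinset := hAJ.trans hJE
  have hinc : ∀ u, G.incidenceFinset u = G.edgeFinset.filter (fun e => u ∈ e) := by
    intro u
    exact G.incidenceFinset_eq_filter u
  have hdegEG : ∀ u, degF G.edgeFinset u = G.degree u := by
    intro u
    unfold degF
    rw [← hinc u]
    exact G.card_incidenceFinset_eq_degree u
  have hc0 : ∀ u, colorCount G f u 0 = degF A u := by
    intro u
    unfold colorCount degF
    congr 1
    rw [hinc u]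
    ext e
    simp only [Finset.mem_filter]
    constructor
    · rintro ⟨⟨_, hue⟩, hfe⟩
      refine ⟨?_, hue⟩
      by_contra hA
      rw [hfdef] at hfe
      simp only [if_neg hA] at hfe
      by_cases hJ : e ∈ J <;> simp [hJ] at hfe
    · rintro ⟨hA, hue⟩
      exact ⟨⟨hAE hA, hue⟩, by rw [hfdef]; simp [hA]⟩
  have hc1 : ∀ u, colorCount G f u 1
      = degF J u - degF A u := by
    intro u
    unfold colorCount degF
    rw [hinc u]
    have hset : (G.edgeFinset.filter (fun e => u ∈ e)).filter (fun e => f e = 1)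
        = (J.filter (fun e => u ∈ e)) \ (A.filter (fun e => u ∈ e)) := by
      ext e
      simp only [Finset.mem_filter, Finset.mem_sdiff]
      constructor
      · rintro ⟨⟨_, hue⟩, hfe⟩
        rw [hfdef] at hfe
        by_cases hA : e ∈ A
        · simp [hA] at hfe
        · by_cases hJ : e ∈ J
          · exact ⟨⟨hJ, hue⟩, fun hc => hA hc.1⟩
          · simp [hA, hJ] at hfe
      · rintro ⟨⟨hJ, hue⟩, hnA⟩
        have hA : e ∉ A := fun hc => hnA ⟨hc, hue⟩
        exact ⟨⟨hJE hJ, hue⟩, by rw [hfdef]; simp [hA, hJ]⟩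
    rw [hset, Finset.card_sdiff_of_subset (Finset.filter_subset_filter _ hAJ)]
  have hc2 : ∀ u, colorCount G f u 2 = G.degree u - degF J u := by
    intro u
    unfold colorCount
    rw [hinc u]
    have hset : (G.edgeFinset.filter (fun e => u ∈ e)).filter (fun e => f e = 2)
        = (G.edgeFinset.filter (fun e => u ∈ e)) \ (J.filter (fun e => u ∈ e)) := by
      ext e
      simp only [Finset.mem_filter, Finset.mem_sdiff]
      constructor
      · rintro ⟨⟨hE, hue⟩, hfe⟩
        rw [hfdef] at hfe
        by_cases hA : e ∈ A
        · simp [hA] at hfe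
        · by_cases hJ : e ∈ J
          · simp [hA, hJ] at hfe
          · exact ⟨⟨hE, hue⟩, fun hc => hJ hc.1⟩
      · rintro ⟨⟨hE, hue⟩, hnJ⟩
        have hJ : e ∉ J := fun hc => hnJ ⟨hc, hue⟩
        have hA : e ∉ A := fun hc => hJ (hAJ hc)
        exact ⟨⟨hE, hue⟩, by rw [hfdef]; simp [hA, hJ]⟩
    rw [hset, Finset.card_sdiff_of_subset (Finset.filter_subset_filter _ hJE)]
    have : #(G.edgeFinset.filter (fun e => u ∈ e)) = G.degree u := hdegEG u
    rw [this]
    rfl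
  have hAleJ : ∀ u, degF A u ≤ degF J u := fun u => degF_mono hAJ u
  have hJledeg : ∀ u, degF J u ≤ G.degree u := fun u => (hdegEG u) ▸ degF_mono hJE u
  refine ⟨f, fun u i => ?_⟩
  have hkey : ∀ j : Fin 3, colorCount G f u j = 0 ∨ Odd (colorCount G f u j) := by
    intro j
    rcases (by decide : ∀ jj : Fin 3, jj = 0 ∨ jj = 1 ∨ jj = 2) j with rfl | rfl | rfl
    all_goals rcases hsub u with hodd | h2
    -- i = 0, odd degree
    · rw [hc0 u]
      by_cases hpos : 0 < degF J u
      · exact Or.inr (hdemand u (hodddeg u hodd) hpos)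
      · left
        have := hAleJ u
        omega
    -- i = 0, degree 2
    · rw [hc0 u]
      rcases Nat.even_or_odd (degF A u) with hev | hodd'
      · left
        rcases hdeg2 u h2 with h1 | hh2
        · have := hAleJ u
          obtain ⟨k, hk⟩ := hev
          omega
        · have hOddA : Odd (degF A u) := hdemand u (by rw [hh2]; decide) (by omega)
          rw [Nat.odd_iff] at hOddA
          rw [Nat.even_iff] at hev
          omega
      · exact Or.inr hodd'
    -- i = 1, odd degree
    · rw [hc1 u]
      by_cases hpos : 0 < degF J u
      · right
        have hOddA := hdemand u (hodddeg u hodd) hpos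
        have hEvJ := hodddeg u hodd
        have := hAleJ u
        rw [Nat.odd_iff] at hOddA ⊢
        rw [Nat.even_iff] at hEvJ
        omega
      · left
        have := hAleJ u
        omega
    -- i = 1, degree 2
    · rw [hc1 u]
      rcases hdeg2 u h2 with h1 | hh2
      · have hA1 : degF A u ≤ 1 := h1 ▸ hAleJ u
        rcases Nat.eq_zero_or_pos (degF A u) with h0 | hp
        · right; rw [h1, h0]; decide
        · left; omega
      · have hOddA : Odd (degF A u) := hdemand u (by rw [hh2]; decide) (by omega)
        have hA2 : degF A u ≤ 2 := hh2 ▸ hAleJ u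
        right
        rw [Nat.odd_iff] at hOddA ⊢
        omega
    -- i = 2, odd degree
    · rw [hc2 u]
      right
      have hEvJ := hodddeg u hodd
      have := hJledeg u
      rw [Nat.odd_iff] at hodd ⊢
      rw [Nat.even_iff] at hEvJ
      omega
    -- i = 2, degree 2
    · rw [hc2 u, h2]
      rcases hdeg2 u h2 with h1 | hh2
      · right; rw [h1]; decide
      · left; rw [hh2]
  exact hkey i

lemma main_coloring (G : SimpleGraph V) [DecidableRel G.Adj]
    (hG : G.Connected) (hsub : ∀ u : V, Odd (G.degree u) ∨ G.degree u = 2)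
    (x : V) (C : G.Walk x x) (hC : C.IsCycle)
    (v : V) (hv : v ∈ C.support) (hdv : G.degree v = 2)
    (h : Even C.length ∨ ∃ w ∈ C.support, w ≠ v ∧ G.degree w = 2) :
    ∃ f : Sym2 V → Fin 3, IsOddColoring G f := by
  classical
  have hdiagEG : ∀ e ∈ G.edgeFinset, ¬ e.IsDiag := fun e he =>
    G.not_isDiag_of_mem_edgeSet (mem_edgeFinset.mp he)
  have hECEG : C.edges.toFinset ⊆ G.edgeFinset := fun e he =>
    mem_edgeFinset.mpr (C.edges_subset_edgeSet (List.mem_toFinset.mp he))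
  have hECeven : ∀ u, Even (degF C.edges.toFinset u) :=
    degF_closed_trail_even C hC.isCircuit.isTrail
  have hfromEG : fromEdgeSet ((G.edgeFinset : Finset (Sym2 V)) : Set (Sym2 V)) = G := by
    rw [coe_edgeFinset, fromEdgeSet_edgeSet]
  have hreachEG : ∀ u w : V,
      (fromEdgeSet ((G.edgeFinset : Finset (Sym2 V)) : Set (Sym2 V))).Reachable u w := by
    intro u w
    rw [hfromEG]
    exact hG.preconnected u w
  have hinc : ∀ u, G.incidenceFinset u = G.edgeFinset.filter (fun e => u ∈ e) := fun u =>
    G.incidenceFinset_eq_filter u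
  have hdegEG : ∀ u, degF G.edgeFinset u = G.degree u := by
    intro u
    unfold degF
    rw [← hinc u]
    exact G.card_incidenceFinset_eq_degree u
  have hfiltercard : #(univ.filter (fun u => 0 < degF C.edges.toFinset u)) = C.length := by
    rw [filter_degF_pos_eq hC, cycle_support_card hC]
  have hECne : (C.edges.toFinset).Nonempty := cycle_edges_toFinset_nonempty C hC
  by_cases hD2 : Even (#(univ.filter (fun u => G.degree u = 2)))
  · -- |D2| even
    set t : V → ZMod 2 := fun u => if G.degree u = 2 then 1 else 0 with htdef
    have hsumt : ∑ u, t u = 0 := by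
      have hb : ∑ u, t u = ((#(univ.filter (fun u => G.degree u = 2)) : ℕ) : ZMod 2) := by
        rw [htdef]
        exact Finset.sum_boole _ _
      rw [hb]
      exact zmod2_eq_zero_iff.mpr hD2
    obtain ⟨J₀, hJ₀sub, hJ₀par⟩ := exists_parity_join G.edgeFinset _ t rfl
      (fun u w _ _ => hreachEG u w) hsumt
    obtain ⟨J, hJSS, hJmin⟩ := Finset.exists_min_image
      (G.edgeFinset.powerset.filter (fun S => ∀ u, (degF S u : ZMod 2) = t u))
      (fun S => S.card)
      ⟨J₀, Finset.mem_filter.mpr ⟨Finset.mem_powerset.mpr hJ₀sub, hJ₀par⟩⟩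
    have hJsub : J ⊆ G.edgeFinset := Finset.mem_powerset.mp (Finset.mem_filter.mp hJSS).1
    have hJpar : ∀ u, (degF J u : ZMod 2) = t u := (Finset.mem_filter.mp hJSS).2
    have hnoeven : ∀ Z, Z ⊆ J → Z.Nonempty → (∀ u, Even (degF Z u)) → False := by
      intro Z hZ hZne hZev
      have hmem : J \ Z ∈ G.edgeFinset.powerset.filter
          (fun S => ∀ u, (degF S u : ZMod 2) = t u) := by
        refine Finset.mem_filter.mpr
          ⟨Finset.mem_powerset.mpr (Finset.sdiff_subset.trans hJsub), fun u => ?_⟩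
        have h1 := degF_sdiff_add hZ u
        have hz0 : ((degF Z u : ℕ) : ZMod 2) = 0 := zmod2_eq_zero_iff.mpr (hZev u)
        have h2 : ((degF (J \ Z) u : ℕ) : ZMod 2) + ((degF Z u : ℕ) : ZMod 2)
            = ((degF J u : ℕ) : ZMod 2) := by rw [← Nat.cast_add, h1]
        rw [hz0, add_zero] at h2
        rw [h2]
        exact hJpar u
      have hlt : (J \ Z).card < J.card := Finset.card_lt_card (Finset.sdiff_ssubset hZ hZne)
      have := hJmin _ hmem
      omega
    obtain ⟨A, hAJ, hdemand⟩ := build_A (C.edges.toFinset) reach_in_EC J.card J rfl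
      (fun e he => hdiagEG e (hJsub he))
      (fun Z hZ hZne hZev => (hnoeven Z hZ hZne hZev).elim)
      (fun hECJ => (hnoeven _ hECJ hECne hECeven).elim)
    apply coloring_of_JA G hsub J A hJsub hAJ hdemand
    · intro u hodd
      have hne2 : ¬ (G.degree u = 2) := by
        intro hc
        rw [hc] at hodd
        exact (by decide : ¬ Odd 2) hodd
      apply zmod2_eq_zero_iff.mp
      rw [hJpar u, htdef]
      simp only [if_neg hne2]
    · intro u h2
      left
      have ht1 : t u = 1 := by rw [htdef]; simp only [if_pos h2]
      have hOdd : Odd (degF J u) := zmod2_eq_one_iff.mp (by rw [hJpar u, ht1])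
      have hle : degF J u ≤ 2 := by rw [← h2, ← hdegEG u]; exact degF_mono hJsub u
      rw [Nat.odd_iff] at hOdd
      omega
  · -- |D2| odd
    have hOddD2 : Odd (#(univ.filter (fun u => G.degree u = 2))) :=
      Nat.not_even_iff_odd.mp hD2
    set t : V → ZMod 2 := fun u => if G.degree u = 2 ∧ u ≠ v then 1 else 0 with htdef
    have hsumt : ∑ u, t u = 0 := by
      have hb : ∑ u, t u
          = ((#(univ.filter (fun u => G.degree u = 2 ∧ u ≠ v)) : ℕ) : ZMod 2) := by
        rw [htdef]
        exact Finset.sum_boole _ _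
      have hseteq : univ.filter (fun u => G.degree u = 2 ∧ u ≠ v)
          = (univ.filter (fun u => G.degree u = 2)).erase v := by
        ext u
        simp only [Finset.mem_filter, Finset.mem_erase, Finset.mem_univ, true_and]
        tauto
      rw [hb, hseteq,
        Finset.card_erase_of_mem (Finset.mem_filter.mpr ⟨Finset.mem_univ v, hdv⟩)]
      apply zmod2_eq_zero_iff.mpr
      obtain ⟨k, hk⟩ := hOddD2
      rw [Nat.even_iff]
      omega
    have hdegv2 : degF G.edgeFinset v = 2 := by rw [hdegEG v, hdv]
    have hECv2 : degF C.edges.toFinset v = 2 := by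
      have hle : degF C.edges.toFinset v ≤ 2 := by
        rw [← hdegv2]; exact degF_mono hECEG v
      have hpos := degF_pos_of_mem_support hC hv
      obtain ⟨k, hk⟩ := hECeven v
      omega
    have hECfilv : C.edges.toFinset.filter (fun e => v ∈ e)
        = G.edgeFinset.filter (fun e => v ∈ e) := by
      apply Finset.eq_of_subset_of_card_le (Finset.filter_subset_filter _ hECEG)
      show degF G.edgeFinset v ≤ degF C.edges.toFinset v
      rw [hdegv2, hECv2]
    obtain ⟨J₀, hJ₀sub, hJ₀par⟩ := exists_parity_join G.edgeFinset _ t rfl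
      (fun u w _ _ => hreachEG u w) hsumt
    have htv : t v = 0 := by rw [htdef]; simp
    have hJ₀v : degF J₀ v = 0 ∨ degF J₀ v = 2 := by
      have hle : degF J₀ v ≤ 2 := by rw [← hdegv2]; exact degF_mono hJ₀sub v
      have hpar : (degF J₀ v : ZMod 2) = 0 := by rw [hJ₀par v, htv]
      obtain ⟨k, hk⟩ := zmod2_eq_zero_iff.mp hpar
      omega
    obtain ⟨J₁, hJ₁sub, hJ₁par, hJ₁v⟩ : ∃ J₁, J₁ ⊆ G.edgeFinset ∧
        (∀ u, (degF J₁ u : ZMod 2) = t u) ∧ degF J₁ v = 2 := by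
      rcases hJ₀v with h0 | h2
      · refine ⟨symd J₀ C.edges.toFinset, symd_subset hJ₀sub hECEG, fun u => ?_, ?_⟩
        · rw [degF_symd_parity, hJ₀par u, zmod2_eq_zero_iff.mpr (hECeven u), add_zero]
        · unfold degF
          rw [filter_symd]
          have hJf : J₀.filter (fun e => v ∈ e) = ∅ := Finset.card_eq_zero.mp h0
          rw [hJf]
          have hemp : symd (∅ : Finset (Sym2 V)) (C.edges.toFinset.filter (fun e => v ∈ e))
              = C.edges.toFinset.filter (fun e => v ∈ e) := by
            ext e; simp [mem_symd]
          rw [hemp]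
          exact hECv2
      · exact ⟨J₀, hJ₀sub, hJ₀par, h2⟩
    set meas : Finset (Sym2 V) → ℕ :=
      fun S => (S \ C.edges.toFinset).card * (G.edgeFinset.card + 1) + S.card with hmeasdef
    obtain ⟨J, hJSS, hJmin⟩ := Finset.exists_min_image
      (G.edgeFinset.powerset.filter
        (fun S => (∀ u, (degF S u : ZMod 2) = t u) ∧ degF S v = 2)) meas
      ⟨J₁, Finset.mem_filter.mpr ⟨Finset.mem_powerset.mpr hJ₁sub, hJ₁par, hJ₁v⟩⟩
    have hJsub : J ⊆ G.edgeFinset := Finset.mem_powerset.mp (Finset.mem_filter.mp hJSS).1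
    have hJpar : ∀ u, (degF J u : ZMod 2) = t u := (Finset.mem_filter.mp hJSS).2.1
    have hJv : degF J v = 2 := (Finset.mem_filter.mp hJSS).2.2
    have hfilJv : J.filter (fun e => v ∈ e) = G.edgeFinset.filter (fun e => v ∈ e) := by
      apply Finset.eq_of_subset_of_card_le (Finset.filter_subset_filter _ hJsub)
      show degF G.edgeFinset v ≤ degF J v
      rw [hdegv2, hJv]
    have hfilECv' : C.edges.toFinset.filter (fun e => v ∈ e)
        = J.filter (fun e => v ∈ e) := by rw [hECfilv, ← hfilJv]
    have hev : ∀ Z, Z ⊆ J → Z.Nonempty → (∀ u, Even (degF Z u)) →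
        Z = C.edges.toFinset ∧ C.edges.toFinset ⊆ J := by
      intro Z hZJ hZne hZev
      have hZEC : Z \ C.edges.toFinset = ∅ := by
        by_contra hZECne
        have hZECne' : (Z \ C.edges.toFinset).Nonempty :=
          Finset.nonempty_of_ne_empty hZECne
        have hZvle : degF Z v ≤ 2 := by rw [← hJv]; exact degF_mono hZJ v
        have hZv : degF Z v = 0 ∨ degF Z v = 2 := by
          obtain ⟨k, hk⟩ := hZev v; omega
        rcases hZv with h0 | h2
        · have hmem : J \ Z ∈ G.edgeFinset.powerset.filter
              (fun S => (∀ u, (degF S u : ZMod 2) = t u) ∧ degF S v = 2) := by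
            refine Finset.mem_filter.mpr
              ⟨Finset.mem_powerset.mpr (Finset.sdiff_subset.trans hJsub), fun u => ?_, ?_⟩
            · have h1 := degF_sdiff_add hZJ u
              have hz0 : ((degF Z u : ℕ) : ZMod 2) = 0 := zmod2_eq_zero_iff.mpr (hZev u)
              have h2 : ((degF (J \ Z) u : ℕ) : ZMod 2) + ((degF Z u : ℕ) : ZMod 2)
                  = ((degF J u : ℕ) : ZMod 2) := by rw [← Nat.cast_add, h1]
              rw [hz0, add_zero] at h2
              rw [h2]; exact hJpar u
            · have h1 := degF_sdiff_add hZJ v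
              omega
          have hminle := hJmin _ hmem
          have hcardlt : (J \ Z).card < J.card :=
            Finset.card_lt_card (Finset.sdiff_ssubset hZJ hZne)
          have hsdsub : ((J \ Z) \ C.edges.toFinset).card ≤ (J \ C.edges.toFinset).card := by
            apply Finset.card_le_card
            intro e he
            rw [Finset.mem_sdiff] at he ⊢
            exact ⟨(Finset.mem_sdiff.mp he.1).1, he.2⟩
          simp only [hmeasdef] at hminle
          have hmul : ((J \ Z) \ C.edges.toFinset).card * (G.edgeFinset.card + 1)
              ≤ (J \ C.edges.toFinset).card * (G.edgeFinset.card + 1) :=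
            Nat.mul_le_mul_right _ hsdsub
          set aq := (J \ C.edges.toFinset).card * (G.edgeFinset.card + 1) with haq
          set ap := ((J \ Z) \ C.edges.toFinset).card * (G.edgeFinset.card + 1) with hap
          omega
        · have hfilZv : Z.filter (fun e => v ∈ e) = J.filter (fun e => v ∈ e) := by
            apply Finset.eq_of_subset_of_card_le (Finset.filter_subset_filter _ hZJ)
            show degF J v ≤ degF Z v
            rw [hJv, h2]
          have hJ'sub : symd J (symd Z C.edges.toFinset) ⊆ G.edgeFinset :=
            symd_subset hJsub (symd_subset (hZJ.trans hJsub) hECEG)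
          have hmem : symd J (symd Z C.edges.toFinset) ∈ G.edgeFinset.powerset.filter
              (fun S => (∀ u, (degF S u : ZMod 2) = t u) ∧ degF S v = 2) := by
            refine Finset.mem_filter.mpr
              ⟨Finset.mem_powerset.mpr hJ'sub, fun u => ?_, ?_⟩
            · rw [degF_symd_parity, degF_symd_parity, hJpar u,
                zmod2_eq_zero_iff.mpr (hZev u), zmod2_eq_zero_iff.mpr (hECeven u)]
              ring
            · unfold degF
              rw [filter_symd, filter_symd, hfilZv, hfilECv']
              have hself : symd (J.filter (fun e => v ∈ e)) (J.filter (fun e => v ∈ e))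
                  = ∅ := by
                ext e; simp [mem_symd]
              rw [hself]
              have hemp : symd (J.filter (fun e => v ∈ e)) (∅ : Finset (Sym2 V))
                  = J.filter (fun e => v ∈ e) := by
                ext e; simp [mem_symd]
              rw [hemp]
              exact hJv
          have hkey : (symd J (symd Z C.edges.toFinset)) \ C.edges.toFinset
              = (J \ C.edges.toFinset) \ (Z \ C.edges.toFinset) := by
            ext e
            simp only [Finset.mem_sdiff, mem_symd]
            have hZJe : e ∈ Z → e ∈ J := fun hh => hZJ hh
            constructor
            · rintro ⟨hor, hnEC⟩
              rcases hor with ⟨hJe, hnS⟩ | ⟨hS, hnJ⟩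
              · refine ⟨⟨hJe, hnEC⟩, ?_⟩
                rintro ⟨hZe, -⟩
                exact hnS (Or.inl ⟨hZe, hnEC⟩)
              · rcases hS with ⟨hZe, -⟩ | ⟨hECe, -⟩
                · exact absurd (hZJe hZe) hnJ
                · exact absurd hECe hnEC
            · rintro ⟨⟨hJe, hnEC⟩, hnZ⟩
              have hZe : e ∉ Z := fun hc => hnZ ⟨hc, hnEC⟩
              refine ⟨Or.inl ⟨hJe, ?_⟩, hnEC⟩
              rintro (⟨hc, -⟩ | ⟨hc, -⟩)
              exacts [hZe hc, hnEC hc]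
          have hstrict : ((symd J (symd Z C.edges.toFinset)) \ C.edges.toFinset).card
              < (J \ C.edges.toFinset).card := by
            rw [hkey]
            apply Finset.card_lt_card
            apply Finset.sdiff_ssubset ?_ hZECne'
            intro e he
            rw [Finset.mem_sdiff] at he ⊢
            exact ⟨hZJ he.1, he.2⟩
          have hminle := hJmin _ hmem
          simp only [hmeasdef] at hminle
          have hble : (symd J (symd Z C.edges.toFinset)).card ≤ G.edgeFinset.card :=
            Finset.card_le_card hJ'sub
          have hmul : (((symd J (symd Z C.edges.toFinset)) \ C.edges.toFinset).card + 1)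
              * (G.edgeFinset.card + 1)
              ≤ (J \ C.edges.toFinset).card * (G.edgeFinset.card + 1) :=
            Nat.mul_le_mul_right _ hstrict
          rw [Nat.succ_mul] at hmul
          set aq := (J \ C.edges.toFinset).card * (G.edgeFinset.card + 1) with haq
          set ap := ((symd J (symd Z C.edges.toFinset)) \ C.edges.toFinset).card
            * (G.edgeFinset.card + 1) with hap
          omega
      have hZsubEC : Z ⊆ C.edges.toFinset := Finset.sdiff_eq_empty_iff_subset.mp hZEC
      rcases even_subset_cycle C hC Z hZsubEC hZev with hZ0 | hZall
      · exact absurd hZ0 (Finset.nonempty_iff_ne_empty.mp hZne)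
      · exact ⟨hZall, hZall ▸ hZJ⟩
    have hoddarg : C.edges.toFinset ⊆ J →
        Even #(univ.filter (fun u => 0 < degF C.edges.toFinset u)) := by
      intro hECJ
      rw [hfiltercard]
      rcases h with heven | ⟨w, hw, hwv, hdw⟩
      · exact heven
      · exfalso
        have h1 := degF_pos_of_mem_support hC hw
        have h2 : degF C.edges.toFinset w ≤ degF J w := degF_mono hECJ w
        have h3 : degF J w ≤ 2 := by rw [← hdw, ← hdegEG w]; exact degF_mono hJsub w
        obtain ⟨k, hk⟩ := hECeven w
        have h5 : degF J w = 2 := by omega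
        have h6 : (degF J w : ZMod 2) = 1 := by
          rw [hJpar w, htdef]
          simp only [if_pos (⟨hdw, hwv⟩ : G.degree w = 2 ∧ w ≠ v)]
        rw [h5] at h6
        exact absurd h6 (by decide)
    obtain ⟨A, hAJ, hdemand⟩ := build_A (C.edges.toFinset) reach_in_EC J.card J rfl
      (fun e he => hdiagEG e (hJsub he)) hev hoddarg
    apply coloring_of_JA G hsub J A hJsub hAJ hdemand
    · intro u hodd
      have hne2 : ¬ (G.degree u = 2 ∧ u ≠ v) := by
        rintro ⟨hc, _⟩
        rw [hc] at hodd
        exact (by decide : ¬ Odd 2) hodd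
      apply zmod2_eq_zero_iff.mp
      rw [hJpar u, htdef]
      simp only [if_neg hne2]
    · intro u h2
      by_cases huv : u = v
      · right; rw [huv]; exact hJv
      · left
        have ht1 : t u = 1 := by
          rw [htdef]
          simp only [if_pos (⟨h2, huv⟩ : G.degree u = 2 ∧ u ≠ v)]
        have hOdd : Odd (degF J u) := zmod2_eq_one_iff.mp (by rw [hJpar u, ht1])
        have hle : degF J u ≤ 2 := by rw [← h2, ← hdegEG u]; exact degF_mono hJsub u
        rw [Nat.odd_iff] at hOdd
        omega

end OddColorAux

theorem cycle_through_two_vertex (G : SimpleGraph V) [DecidableRel G.Adj]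
    (hG : G.Connected) (hsub : ∀ u : V, Odd (G.degree u) ∨ G.degree u = 2)
    (x : V) (C : G.Walk x x) (hC : C.IsCycle)
    (v : V) (hv : v ∈ C.support) (hdv : G.degree v = 2)
    (h : Even C.length ∨ ∃ w ∈ C.support, w ≠ v ∧ G.degree w = 2) :
    oddChromIndex G ≤ 3 := by
  apply Nat.sInf_le
  exact OddColorAux.main_coloring G hG hsub x C hC v hv hdv h
end
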